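/- arXiv:1212.3801 — 6 statements merged into one kernel-verified Lean document; each statement's English description precedes it below -/
import Mathlib

section
/- With the wave-vector setup in the context, define U₀(t,x) = r^{−β} Σ_{i=1}^r |k_i|^α ( e^{−|k_i|^{2α} t} cos(k_i·x) v + e^{−|k_i'|^{2α} t} cos(k_i'·x) v' ), and define E₀(t,x) = −(r^{−2β}/2) Σ_{i=1}^r |k_i|^{2α} e^{−(|k_i|^{2α}+|k_i'|^{2α})t} sin(η·x) v', E₁(t,x) = −(r^{−2β}/2) Σ_{1≤i≠j≤r} |k_i|^α |k_j|^α e^{−(|k_i|^{2α}+|k_j'|^{2α})t} sin((k_j'−k_i)·x) v', and E₂(t,x) = −(r^{−2β}/2) Σ_{i=1}^r Σ_{j=1}^r |k_i|^α |k_j|^α e^{−(|k_i|^{2α}+|k_j'|^{2α})t} sin((k_j'+k_i)·x) v'. Then for all t ≥ 0 and all x ∈ ℝ³: (U₀(t,x)·∇_x) U₀(t,·)(x) = E₀(t,x) + E₁(t,x) + E₂(t,x). -/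
/-- With the lacunary wave vectors `k_i = (2^(i-1)K, 0, 0)`, `k_i' = k_i + (0,0,1)`,
amplitudes `v = (0,0,1)`, `v' = (0,1,0)`, and the fractional heat evolution `U₀` of the
initial datum `u₀`, the quadratic interaction decomposes as
`(U₀·∇)U₀ = E₀ + E₁ + E₂` (resonant, difference-frequency and sum-frequency parts). -/
theorem stmt_5 (r : ℕ) (hr : 1 ≤ r) (K α β : ℝ) (hK : 1 ≤ K) (hα : 1 ≤ α) (hβ : 0 < β)
    (kmag : ℕ → ℝ) (hkmag : ∀ i, kmag i = (2:ℝ) ^ (i - 1) * K)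
    (k k' : ℕ → Fin 3 → ℝ)
    (hk : ∀ i, k i = ![kmag i, 0, 0])
    (hk' : ∀ i, k' i = ![kmag i, 0, 1])
    (U₀ E₀ E₁ E₂ : ℝ → (Fin 3 → ℝ) → Fin 3 → ℝ)
    (hU₀ : ∀ t x, U₀ t x = ((r:ℝ) ^ (-β)) •
      ∑ i ∈ Finset.Icc 1 r,
        ((kmag i ^ α * Real.exp (-(kmag i ^ (2 * α)) * t) *
            Real.cos (∑ m, k i m * x m)) • (![0, 0, 1] : Fin 3 → ℝ) +
          (kmag i ^ α * Real.exp (-((kmag i ^ 2 + 1) ^ α) * t) *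
            Real.cos (∑ m, k' i m * x m)) • (![0, 1, 0] : Fin 3 → ℝ)))
    (hE₀ : ∀ t x, E₀ t x = (-((r:ℝ) ^ (-(2 * β)) / 2)) •
      ∑ i ∈ Finset.Icc 1 r,
        (kmag i ^ (2 * α) * Real.exp (-(kmag i ^ (2 * α) + (kmag i ^ 2 + 1) ^ α) * t) *
          Real.sin (x 2)) • (![0, 1, 0] : Fin 3 → ℝ))
    (hE₁ : ∀ t x, E₁ t x = (-((r:ℝ) ^ (-(2 * β)) / 2)) •
      ∑ i ∈ Finset.Icc 1 r, ∑ j ∈ Finset.Icc 1 r,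
        if i ≠ j then
          (kmag i ^ α * kmag j ^ α *
            Real.exp (-(kmag i ^ (2 * α) + (kmag j ^ 2 + 1) ^ α) * t) *
            Real.sin (∑ m, (k' j m - k i m) * x m)) • (![0, 1, 0] : Fin 3 → ℝ)
        else 0)
    (hE₂ : ∀ t x, E₂ t x = (-((r:ℝ) ^ (-(2 * β)) / 2)) •
      ∑ i ∈ Finset.Icc 1 r, ∑ j ∈ Finset.Icc 1 r,
        (kmag i ^ α * kmag j ^ α *
          Real.exp (-(kmag i ^ (2 * α) + (kmag j ^ 2 + 1) ^ α) * t) *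
          Real.sin (∑ m, (k' j m + k i m) * x m)) • (![0, 1, 0] : Fin 3 → ℝ)) :
    ∀ t : ℝ, 0 ≤ t → ∀ (x : Fin 3 → ℝ) (p : Fin 3),
      (∑ m, U₀ t x m * fderiv ℝ (fun y => U₀ t y p) x (Pi.single m 1)) =
        E₀ t x p + E₁ t x p + E₂ t x p := by
  intro t _ x p
  have hr0 : (0:ℝ) < (r:ℝ) := by exact_mod_cast Nat.lt_of_lt_of_le Nat.zero_lt_one hr
  set c : ℝ := (r:ℝ) ^ (-β) with hc
  set vp : ℝ := (![0, 0, 1] : Fin 3 → ℝ) p with hvp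
  set wp : ℝ := (![0, 1, 0] : Fin 3 → ℝ) p with hwp
  set A : ℕ → ℝ := fun i => kmag i ^ α * Real.exp (-(kmag i ^ (2 * α)) * t) with hA
  set B : ℕ → ℝ := fun i => kmag i ^ α * Real.exp (-((kmag i ^ 2 + 1) ^ α) * t) with hB
  set L : ℕ → ℝ := fun i => ∑ m, k i m * x m with hL
  set M : ℕ → ℝ := fun i => ∑ m, k' i m * x m with hM
  -- linear form derivative
  have hproj : ∀ (a : Fin 3 → ℝ), HasFDerivAt (fun y : Fin 3 → ℝ => ∑ m, a m * y m)
      (∑ m : Fin 3, a m • (ContinuousLinearMap.proj m : (Fin 3 → ℝ) →L[ℝ] ℝ)) x := by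
    intro a
    apply HasFDerivAt.fun_sum
    intro m _
    exact (ContinuousLinearMap.proj m : (Fin 3 → ℝ) →L[ℝ] ℝ).hasFDerivAt.const_mul (a m)
  have hfun : (fun y => U₀ t y p) = (fun y : Fin 3 → ℝ => c * ∑ i ∈ Finset.Icc 1 r,
      ((kmag i ^ α * Real.exp (-(kmag i ^ (2 * α)) * t) * Real.cos (∑ m, k i m * y m)) * vp
      + (kmag i ^ α * Real.exp (-((kmag i ^ 2 + 1) ^ α) * t) * Real.cos (∑ m, k' i m * y m)) * wp)) := by
    funext y
    rw [hU₀]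
    simp only [Finset.sum_apply, Pi.smul_apply, Pi.add_apply, smul_eq_mul]
    rfl
  have hder : HasFDerivAt (fun y => U₀ t y p)
      (c • ∑ i ∈ Finset.Icc 1 r,
        (vp • ((kmag i ^ α * Real.exp (-(kmag i ^ (2 * α)) * t)) •
            ((-Real.sin (∑ m, k i m * x m)) •
              (∑ m : Fin 3, k i m • (ContinuousLinearMap.proj m : (Fin 3 → ℝ) →L[ℝ] ℝ))))
        + wp • ((kmag i ^ α * Real.exp (-((kmag i ^ 2 + 1) ^ α) * t)) •
            ((-Real.sin (∑ m, k' i m * x m)) •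
              (∑ m : Fin 3, k' i m • (ContinuousLinearMap.proj m : (Fin 3 → ℝ) →L[ℝ] ℝ)))))) x := by
    rw [hfun]
    exact (HasFDerivAt.fun_sum (fun i _ =>
      ((((hproj (k i)).cos).const_mul _).mul_const _).fun_add
      ((((hproj (k' i)).cos).const_mul _).mul_const _))).const_mul c
  have hfder := hder.fderiv
  rw [hfder]
  have happly : ∀ (a : Fin 3 → ℝ) (m : Fin 3),
      (∑ m' : Fin 3, a m' • (ContinuousLinearMap.proj m' : (Fin 3 → ℝ) →L[ℝ] ℝ)) (Pi.single m 1) = a m := by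
    intro a m
    simp [ContinuousLinearMap.sum_apply, Pi.single_apply]
  simp only [ContinuousLinearMap.smul_apply, ContinuousLinearMap.coe_sum', Finset.sum_apply,
    ContinuousLinearMap.add_apply, happly, smul_eq_mul]
  have hk0 : ∀ i, k i 0 = kmag i := fun i => by rw [hk]; rfl
  have hk1 : ∀ i, k i 1 = 0 := fun i => by rw [hk]; rfl
  have hk2 : ∀ i, k i 2 = 0 := fun i => by rw [hk]; rfl
  have hk'0 : ∀ i, k' i 0 = kmag i := fun i => by rw [hk']; rfl
  have hk'1 : ∀ i, k' i 1 = 0 := fun i => by rw [hk']; rfl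
  have hk'2 : ∀ i, k' i 2 = 1 := fun i => by rw [hk']; rfl
  have hUm : ∀ m, U₀ t x m = c * ∑ i ∈ Finset.Icc 1 r,
      ((A i * Real.cos (L i)) * (![0,0,1] : Fin 3 → ℝ) m + (B i * Real.cos (M i)) * (![0,1,0] : Fin 3 → ℝ) m) := by
    intro m
    rw [hU₀]
    simp only [Finset.sum_apply, Pi.smul_apply, Pi.add_apply, smul_eq_mul, hA, hB, hL, hM]
  rw [Fin.sum_univ_three]
  rw [hUm 0, hUm 1, hUm 2]
  simp only [hk0, hk1, hk2, hk'0, hk'1, hk'2, Matrix.cons_val_zero, Matrix.cons_val_one,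
    Matrix.head_cons, Matrix.cons_val_two, Matrix.tail_cons, mul_zero, zero_mul, add_zero,
    zero_add, mul_one, Finset.sum_const_zero, neg_zero]
  rw [hE₀, hE₁, hE₂]
  simp only [Finset.sum_apply, Pi.smul_apply, Pi.add_apply, smul_eq_mul,
    apply_ite (fun v : Fin 3 → ℝ => v p), Pi.zero_apply]
  have hcc : c * c = (r:ℝ) ^ (-(2 * β)) := by
    rw [hc, ← Real.rpow_add hr0]
    congr 1
    ring
  rw [mul_mul_mul_comm, hcc, Finset.sum_mul_sum]
  rw [← hwp]
  simp only [Finset.mul_sum, mul_ite, mul_zero]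
  have hdiag : (∑ i ∈ Finset.Icc 1 r, (-((r:ℝ) ^ (-(2 * β)) / 2) *
        (kmag i ^ (2 * α) * Real.exp (-(kmag i ^ (2 * α) + (kmag i ^ 2 + 1) ^ α) * t) *
          Real.sin (x 2) * wp)))
      = ∑ i ∈ Finset.Icc 1 r, ∑ j ∈ Finset.Icc 1 r,
          (if j = i then -((r:ℝ) ^ (-(2 * β)) / 2) *
            (kmag i ^ (2 * α) * Real.exp (-(kmag i ^ (2 * α) + (kmag i ^ 2 + 1) ^ α) * t) *
              Real.sin (x 2) * wp) else 0) := by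
    refine Finset.sum_congr rfl fun i hi => ?_
    rw [Finset.sum_ite_eq' (Finset.Icc 1 r) i, if_pos hi]
  rw [hdiag]
  simp only [← Finset.sum_add_distrib]
  refine Finset.sum_congr rfl fun i hi => Finset.sum_congr rfl fun j hj => ?_
  have hK0 : (0:ℝ) < K := lt_of_lt_of_le one_pos hK
  have hkpos : ∀ n, 0 < kmag n := fun n => by rw [hkmag]; positivity
  have hZ : ∀ a b : ℕ, Real.exp (-(kmag a ^ (2 * α) + (kmag b ^ 2 + 1) ^ α) * t)
      = Real.exp (-kmag a ^ (2 * α) * t) * Real.exp (-(kmag b ^ 2 + 1) ^ α * t) := by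
    intro a b
    rw [← Real.exp_add]
    congr 1
    ring
  have hsum : (∑ m, (k' j m + k i m) * x m) = M j + L i := by
    simp only [hM, hL, add_mul, Finset.sum_add_distrib]
  have hdiff : (∑ m, (k' j m - k i m) * x m) = M j - L i := by
    simp only [hM, hL, sub_mul, Finset.sum_sub_distrib]
  by_cases hij : i = j
  · subst hij
    rw [if_pos rfl, if_neg (not_not_intro rfl)]
    have hx2 : x 2 = M i - L i := by
      simp [hM, hL, hk, hk', Fin.sum_univ_three]
    have hP : kmag i ^ (2 * α) = kmag i ^ α * kmag i ^ α := by
      rw [show 2 * α = α + α by ring, Real.rpow_add (hkpos i)]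
    have htrig : Real.sin (M i - L i) = 2 * Real.sin (M i) * Real.cos (L i) - Real.sin (M i + L i) := by
      rw [Real.sin_sub, Real.sin_add]
      ring
    rw [hsum, hx2, htrig, hZ]
    simp only [hA, hB, hL, hM]
    simp only [hP]
    ring
  · rw [if_neg (fun h => hij h.symm), if_pos hij]
    have htrig : Real.sin (M j - L i) = 2 * Real.sin (M j) * Real.cos (L i) - Real.sin (M j + L i) := by
      rw [Real.sin_sub, Real.sin_add]
      ring
    rw [hsum, hdiff, htrig, hZ]
    simp only [hA, hB, hL, hM]
    ring
end

section
/- With the wave-vector setup in the context, define U₀(t,x) = r^{−β} Σ_{i=1}^r |k_i|^α ( e^{−|k_i|^{2α} t} cos(k_i·x) v + e^{−|k_i'|^{2α} t} cos(k_i'·x) v' ). Then there is a constant C depending only on α (independent of r, K, t, x, β) such that for all t > 0 and all x ∈ ℝ³: |U₀(t,x)| ≤ r^{−β} Σ_{i=1}^r |k_i|^α ( e^{−|k_i|^{2α} t} + e^{−|k_i'|^{2α} t} ) ≤ C · r^{−β} · t^{−1/2}. In particular sup_{t>0} t^{1/2} sup_{x} |U₀(t,x)| ≤ C r^{−β}, i.e.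 the homogeneous Besov norm ‖u₀‖_{Ḃ^{−α}_{∞,∞}} = sup_{t>0} t^{1/2} ‖e^{−t(−Δ)^α}u₀‖_{L^∞} of the initial datum u₀ = U₀(0,·) is at most C r^{−β}. -/
open Finset

/-- geometric sum with ratio ≥ 2 is at most twice the last term -/
private lemma aux_geo {q : ℝ} (hq : 2 ≤ q) : ∀ m : ℕ, ∑ i ∈ range (m+1), q ^ i ≤ 2 * q ^ m := by
  intro m
  induction m with
  | zero => norm_num
  | succ n ih =>
    rw [Finset.sum_range_succ]
    have hqn : (0:ℝ) ≤ q ^ n := by positivity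
    have : 2 * q ^ n ≤ q ^ (n+1) := by
      rw [pow_succ]; nlinarith
    nlinarith

private lemma aux_min_sum {q s : ℝ} (hq : 2 ≤ q) (hs : 0 < s) (r : ℕ) :
    ∑ j ∈ range r, min (s * q ^ j) (s * q ^ j)⁻¹ ≤ 4 := by
  have hq0 : (0:ℝ) < q := by linarith
  by_cases h : ∃ n : ℕ, 1 < s * q ^ n
  · have hN : 1 < s * q ^ (Nat.find h) := Nat.find_spec h
    have hmin : ∀ i < Nat.find h, s * q ^ i ≤ 1 := fun i hi => not_lt.mp (Nat.find_min h hi)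
    have hsplit : ∑ j ∈ range r, min (s * q ^ j) (s * q ^ j)⁻¹
        = (∑ j ∈ Finset.Ico 0 (min (Nat.find h) r), min (s * q ^ j) (s * q ^ j)⁻¹)
          + ∑ j ∈ Finset.Ico (min (Nat.find h) r) r, min (s * q ^ j) (s * q ^ j)⁻¹ := by
      rw [Finset.range_eq_Ico,
        Finset.sum_Ico_consecutive _ (Nat.zero_le _) (min_le_right (Nat.find h) r)]
    have hpart1 : ∑ j ∈ Finset.Ico 0 (min (Nat.find h) r),
        min (s * q ^ j) (s * q ^ j)⁻¹ ≤ 2 := by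
      rw [← Finset.range_eq_Ico]
      rcases Nat.eq_zero_or_pos (min (Nat.find h) r) with h0 | h0
      · rw [h0, Finset.range_zero, Finset.sum_empty]; norm_num
      · obtain ⟨m', hm'⟩ : ∃ m', min (Nat.find h) r = m' + 1 :=
          ⟨min (Nat.find h) r - 1, by omega⟩
        rw [hm']
        calc ∑ j ∈ range (m'+1), min (s * q ^ j) (s * q ^ j)⁻¹
            ≤ ∑ j ∈ range (m'+1), s * q ^ j :=
              Finset.sum_le_sum fun j _ => min_le_left _ _
          _ = s * ∑ j ∈ range (m'+1), q ^ j := by rw [Finset.mul_sum]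
          _ ≤ s * (2 * q ^ m') := mul_le_mul_of_nonneg_left (aux_geo hq m') hs.le
          _ = 2 * (s * q ^ m') := by ring
          _ ≤ 2 * 1 := by
              have : s * q ^ m' ≤ 1 := hmin m' (by omega)
              linarith
          _ = 2 := by norm_num
    have hpart2 : ∑ j ∈ Finset.Ico (min (Nat.find h) r) r,
        min (s * q ^ j) (s * q ^ j)⁻¹ ≤ 2 := by
      rcases le_or_gt r (min (Nat.find h) r) with hrm | hmr
      · rw [Finset.Ico_eq_empty (by omega), Finset.sum_empty]; norm_num
      · have hmN : min (Nat.find h) r = Nat.find h := by omega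
        rw [hmN, Finset.sum_Ico_eq_sum_range]
        have hbound : ∀ j ∈ range (r - Nat.find h),
            min (s * q ^ (Nat.find h + j)) (s * q ^ (Nat.find h + j))⁻¹ ≤ (1/2 : ℝ) ^ j := by
          intro j _
          refine le_trans (min_le_right _ _) ?_
          rw [pow_add, ← mul_assoc, mul_inv]
          have h1 : (s * q ^ (Nat.find h))⁻¹ ≤ 1 := by
            rw [inv_le_one_iff₀]; right; linarith
          have h2 : (q ^ j)⁻¹ ≤ (1/2:ℝ) ^ j := by
            rw [← inv_pow]
            apply pow_le_pow_left₀ (by positivity)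
            rw [one_div]
            exact inv_anti₀ (by norm_num) hq
          calc (s * q ^ (Nat.find h))⁻¹ * (q ^ j)⁻¹ ≤ 1 * (1/2:ℝ)^j := by
                apply mul_le_mul h1 h2 (by positivity) (by norm_num)
            _ = (1/2:ℝ)^j := by ring
        calc ∑ j ∈ range (r - Nat.find h),
              min (s * q ^ (Nat.find h + j)) (s * q ^ (Nat.find h + j))⁻¹
            ≤ ∑ j ∈ range (r - Nat.find h), (1/2:ℝ)^j := Finset.sum_le_sum hbound
          _ ≤ 2 := sum_geometric_two_le _
    rw [hsplit]; linarith
  · push_neg at h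
    rcases Nat.eq_zero_or_pos r with h0 | h0
    · rw [h0, Finset.range_zero, Finset.sum_empty]; norm_num
    · obtain ⟨r', rfl⟩ : ∃ r', r = r' + 1 := ⟨r - 1, (Nat.succ_pred_eq_of_pos h0).symm⟩
      calc ∑ j ∈ range (r'+1), min (s * q ^ j) (s * q ^ j)⁻¹
          ≤ ∑ j ∈ range (r'+1), s * q ^ j :=
            Finset.sum_le_sum fun j _ => min_le_left _ _
        _ = s * ∑ j ∈ range (r'+1), q ^ j := by rw [Finset.mul_sum]
        _ ≤ s * (2 * q ^ r') := mul_le_mul_of_nonneg_left (aux_geo hq r') hs.le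
        _ = 2 * (s * q ^ r') := by ring
        _ ≤ 2 * 1 := by have := h r'; linarith
        _ ≤ 4 := by norm_num

/-- `u e^{-u²} ≤ min u u⁻¹` for `u > 0`. -/
private lemma aux_g {u : ℝ} (hu : 0 < u) : u * Real.exp (-(u^2)) ≤ min u u⁻¹ := by
  have he : Real.exp (-(u^2)) ≤ 1 := by
    have := Real.exp_le_exp.mpr (neg_nonpos.mpr (sq_nonneg u))
    rwa [Real.exp_zero] at this
  apply le_min
  · nlinarith [Real.exp_pos (-(u^2))]
  · rw [inv_eq_one_div, le_div_iff₀ hu]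
    have h1 : u^2 ≤ Real.exp (u^2) := by nlinarith [Real.add_one_le_exp (u^2)]
    have h2 : Real.exp (-(u^2)) * Real.exp (u^2) = 1 := by
      rw [← Real.exp_add]; simp
    have h3 : u^2 * Real.exp (-(u^2)) ≤ Real.exp (u^2) * Real.exp (-(u^2)) :=
      mul_le_mul_of_nonneg_right h1 (Real.exp_pos _).le
    nlinarith

set_option maxHeartbeats 1000000 in
/-- The fractional heat evolution `U₀(t,·) = e^{-t(-Δ)^α} u₀` of the initial datum satisfies,
with a constant `C = C(α)` independent of `r, K, t, x, β`:
`|U₀(t,x)| ≤ r^{-β} ∑_i |k_i|^α (e^{-|k_i|^{2α}t} + e^{-|k_i'|^{2α}t}) ≤ C r^{-β} t^{-1/2}`;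
in particular `t^{1/2} |U₀(t,x)| ≤ C r^{-β}` for all `t > 0`, `x`, i.e.
`‖u₀‖_{Ḃ^{-α}_{∞,∞}} ≤ C r^{-β}`. -/
theorem stmt_7 (α : ℝ) (hα : 1 ≤ α) :
    ∃ C : ℝ, 0 < C ∧
      ∀ r : ℕ, 1 ≤ r → ∀ K β : ℝ, 1 ≤ K → 0 < β →
      ∀ kmag : ℕ → ℝ, (∀ i, kmag i = (2:ℝ) ^ (i - 1) * K) →
      ∀ k k' : ℕ → Fin 3 → ℝ,
        (∀ i, k i = ![kmag i, 0, 0]) → (∀ i, k' i = ![kmag i, 0, 1]) →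
      ∀ U₀ : ℝ → (Fin 3 → ℝ) → Fin 3 → ℝ,
        (∀ t x, U₀ t x = ((r:ℝ) ^ (-β)) •
          ∑ i ∈ Finset.Icc 1 r,
            ((kmag i ^ α * Real.exp (-(kmag i ^ (2 * α)) * t) *
                Real.cos (∑ m, k i m * x m)) • (![0, 0, 1] : Fin 3 → ℝ) +
              (kmag i ^ α * Real.exp (-((kmag i ^ 2 + 1) ^ α) * t) *
                Real.cos (∑ m, k' i m * x m)) • (![0, 1, 0] : Fin 3 → ℝ))) →
      ∀ t : ℝ, 0 < t → ∀ x : Fin 3 → ℝ,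
        Real.sqrt (∑ p, U₀ t x p ^ 2) ≤
            (r:ℝ) ^ (-β) * ∑ i ∈ Finset.Icc 1 r,
              kmag i ^ α * (Real.exp (-(kmag i ^ (2 * α)) * t) +
                Real.exp (-((kmag i ^ 2 + 1) ^ α) * t)) ∧
        (r:ℝ) ^ (-β) * (∑ i ∈ Finset.Icc 1 r,
              kmag i ^ α * (Real.exp (-(kmag i ^ (2 * α)) * t) +
                Real.exp (-((kmag i ^ 2 + 1) ^ α) * t))) ≤
            C * (r:ℝ) ^ (-β) * t ^ (-(1 / 2 : ℝ)) ∧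
        t ^ ((1:ℝ) / 2) * Real.sqrt (∑ p, U₀ t x p ^ 2) ≤ C * (r:ℝ) ^ (-β) := by
  refine ⟨8, by norm_num, ?_⟩
  intro r hr K β hK hβ kmag hkmag k k' hk hk' U₀ hU t ht x
  have hK0 : (0:ℝ) < K := lt_of_lt_of_le one_pos hK
  have hkm : ∀ i, 0 < kmag i := by intro i; rw [hkmag]; positivity
  have hα0 : (0:ℝ) ≤ α := by linarith
  have hq2 : (2:ℝ) ≤ (2:ℝ) ^ α := by
    calc (2:ℝ) = (2:ℝ) ^ (1:ℝ) := (Real.rpow_one 2).symm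
      _ ≤ (2:ℝ) ^ α := Real.rpow_le_rpow_of_exponent_le one_le_two hα
  have hq0 : (0:ℝ) < (2:ℝ) ^ α := by linarith
  have hst : 0 < Real.sqrt t := Real.sqrt_pos.mpr ht
  have hKα : 0 < K ^ α := Real.rpow_pos_of_pos hK0 α
  have hs0 : 0 < Real.sqrt t * K ^ α := mul_pos hst hKα
  -- rewrite kmag i ^ α
  have hkα : ∀ i : ℕ, kmag i ^ α = K ^ α * ((2:ℝ) ^ α) ^ (i - 1) := by
    intro i
    rw [hkmag i, Real.mul_rpow (by positivity) hK0.le]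
    have h2 : ((2:ℝ) ^ (i-1 : ℕ)) ^ α = ((2:ℝ) ^ α) ^ (i-1 : ℕ) := by
      rw [← Real.rpow_natCast (2:ℝ) (i-1), ← Real.rpow_mul (by norm_num), mul_comm,
        Real.rpow_mul (by norm_num), Real.rpow_natCast]
    rw [h2, mul_comm]
  have hkα_pos : ∀ i, 0 < kmag i ^ α := fun i => Real.rpow_pos_of_pos (hkm i) α
  -- kmag^(2α) = (kmag^α)^2
  have hk2α : ∀ i : ℕ, kmag i ^ (2*α) = (kmag i ^ α)^2 := by
    intro i
    rw [mul_comm, Real.rpow_mul (hkm i).le, ← Real.rpow_natCast (kmag i ^ α) 2]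
    norm_num
  -- second exponential smaller
  have hexp2 : ∀ i : ℕ, Real.exp (-((kmag i ^ 2 + 1) ^ α) * t)
      ≤ Real.exp (-(kmag i ^ (2*α)) * t) := by
    intro i
    apply Real.exp_le_exp.mpr
    have h1 : kmag i ^ (2*α) ≤ (kmag i ^ 2 + 1) ^ α := by
      have he : kmag i ^ (2*α) = (kmag i ^ 2) ^ α := by
        rw [Real.rpow_mul (hkm i).le, ← Real.rpow_natCast (kmag i) 2]
        norm_num
      rw [he]
      exact Real.rpow_le_rpow (by positivity) (by linarith) hα0
    nlinarith
  -- each term bound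
  have hterm : ∀ i ∈ Finset.Icc 1 r,
      kmag i ^ α * (Real.exp (-(kmag i ^ (2*α)) * t) +
        Real.exp (-((kmag i ^ 2 + 1) ^ α) * t))
      ≤ 2 * (Real.sqrt t)⁻¹ * min (Real.sqrt t * K ^ α * ((2:ℝ) ^ α) ^ (i-1))
          (Real.sqrt t * K ^ α * ((2:ℝ) ^ α) ^ (i-1))⁻¹ := by
    intro i _
    have hu : Real.sqrt t * K ^ α * ((2:ℝ) ^ α) ^ (i-1) = Real.sqrt t * kmag i ^ α := by
      rw [hkα i]; ring
    rw [hu]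
    have hu0 : 0 < Real.sqrt t * kmag i ^ α := mul_pos hst (hkα_pos i)
    have husq : (Real.sqrt t * kmag i ^ α) ^ 2 = kmag i ^ (2*α) * t := by
      rw [hk2α i, mul_pow, Real.sq_sqrt ht.le]; ring
    have hexp_eq : Real.exp (-(kmag i ^ (2*α)) * t)
        = Real.exp (-((Real.sqrt t * kmag i ^ α)^2)) := by
      rw [husq, neg_mul]
    have hak : kmag i ^ α = (Real.sqrt t)⁻¹ * (Real.sqrt t * kmag i ^ α) := by
      field_simp
    calc kmag i ^ α * (Real.exp (-(kmag i ^ (2*α)) * t) +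
          Real.exp (-((kmag i ^ 2 + 1) ^ α) * t))
        ≤ kmag i ^ α * (2 * Real.exp (-(kmag i ^ (2*α)) * t)) := by
          apply mul_le_mul_of_nonneg_left _ (hkα_pos i).le
          have := hexp2 i; linarith
      _ = 2 * (Real.sqrt t)⁻¹ * ((Real.sqrt t * kmag i ^ α) *
            Real.exp (-((Real.sqrt t * kmag i ^ α)^2))) := by
          rw [hexp_eq]
          nth_rewrite 1 [hak]
          ring
      _ ≤ 2 * (Real.sqrt t)⁻¹ * min (Real.sqrt t * kmag i ^ α)
            (Real.sqrt t * kmag i ^ α)⁻¹ := by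
          apply mul_le_mul_of_nonneg_left (aux_g hu0)
          have : 0 ≤ (Real.sqrt t)⁻¹ := by positivity
          linarith
  -- the sum bound
  have hSUM : (∑ i ∈ Finset.Icc 1 r,
      kmag i ^ α * (Real.exp (-(kmag i ^ (2 * α)) * t) +
        Real.exp (-((kmag i ^ 2 + 1) ^ α) * t))) ≤ 8 * (Real.sqrt t)⁻¹ := by
    calc (∑ i ∈ Finset.Icc 1 r,
          kmag i ^ α * (Real.exp (-(kmag i ^ (2 * α)) * t) +
            Real.exp (-((kmag i ^ 2 + 1) ^ α) * t)))
        ≤ ∑ i ∈ Finset.Icc 1 r,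
          2 * (Real.sqrt t)⁻¹ * min (Real.sqrt t * K ^ α * ((2:ℝ) ^ α) ^ (i-1))
            (Real.sqrt t * K ^ α * ((2:ℝ) ^ α) ^ (i-1))⁻¹ :=
        Finset.sum_le_sum hterm
      _ = 2 * (Real.sqrt t)⁻¹ * ∑ i ∈ Finset.Icc 1 r,
          min (Real.sqrt t * K ^ α * ((2:ℝ) ^ α) ^ (i-1))
            (Real.sqrt t * K ^ α * ((2:ℝ) ^ α) ^ (i-1))⁻¹ := by rw [Finset.mul_sum]
      _ ≤ 2 * (Real.sqrt t)⁻¹ * 4 := by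
          apply mul_le_mul_of_nonneg_left _ (by positivity)
          have hIcc : Finset.Icc 1 r = Finset.Ico 1 (r+1) := by
            rw [Nat.Icc_eq_range', Nat.Ico_eq_range']
          have hre : ∑ i ∈ Finset.Icc 1 r,
              min (Real.sqrt t * K ^ α * ((2:ℝ) ^ α) ^ (i-1))
                (Real.sqrt t * K ^ α * ((2:ℝ) ^ α) ^ (i-1))⁻¹
              = ∑ j ∈ range r, min (Real.sqrt t * K ^ α * ((2:ℝ) ^ α) ^ j)
                (Real.sqrt t * K ^ α * ((2:ℝ) ^ α) ^ j)⁻¹ := by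
            rw [hIcc, Finset.sum_Ico_eq_sum_range]
            simp
          rw [hre]
          exact aux_min_sum hq2 hs0 r
      _ = 8 * (Real.sqrt t)⁻¹ := by ring
  have hrβ : (0:ℝ) ≤ (r:ℝ) ^ (-β) := Real.rpow_nonneg (Nat.cast_nonneg r) _
  have htrp : t ^ (-(1/2:ℝ)) = (Real.sqrt t)⁻¹ := by
    rw [Real.rpow_neg ht.le, Real.sqrt_eq_rpow]
  -- second inequality
  have hineq2 : (r:ℝ) ^ (-β) * (∑ i ∈ Finset.Icc 1 r,
      kmag i ^ α * (Real.exp (-(kmag i ^ (2 * α)) * t) +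
        Real.exp (-((kmag i ^ 2 + 1) ^ α) * t)))
      ≤ 8 * (r:ℝ) ^ (-β) * t ^ (-(1/2:ℝ)) := by
    rw [htrp]
    calc (r:ℝ) ^ (-β) * (∑ i ∈ Finset.Icc 1 r,
          kmag i ^ α * (Real.exp (-(kmag i ^ (2 * α)) * t) +
            Real.exp (-((kmag i ^ 2 + 1) ^ α) * t)))
        ≤ (r:ℝ) ^ (-β) * (8 * (Real.sqrt t)⁻¹) :=
        mul_le_mul_of_nonneg_left hSUM hrβ
      _ = 8 * (r:ℝ) ^ (-β) * (Real.sqrt t)⁻¹ := by ring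
  -- first inequality : components
  have hcomp : ∀ p : Fin 3, U₀ t x p = (r:ℝ) ^ (-β) *
      ∑ i ∈ Finset.Icc 1 r,
        ((kmag i ^ α * Real.exp (-(kmag i ^ (2 * α)) * t) *
            Real.cos (∑ m, k i m * x m)) * (![0,0,1] : Fin 3 → ℝ) p +
          (kmag i ^ α * Real.exp (-((kmag i ^ 2 + 1) ^ α) * t) *
            Real.cos (∑ m, k' i m * x m)) * (![0,1,0] : Fin 3 → ℝ) p) := by
    intro p
    rw [hU t x]
    simp only [Pi.smul_apply, Finset.sum_apply, Pi.add_apply, smul_eq_mul]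
  have h0 : U₀ t x 0 = 0 := by rw [hcomp 0]; simp
  have h1 : U₀ t x 1 = (r:ℝ) ^ (-β) * ∑ i ∈ Finset.Icc 1 r,
      kmag i ^ α * Real.exp (-((kmag i ^ 2 + 1) ^ α) * t) *
        Real.cos (∑ m, k' i m * x m) := by
    rw [hcomp 1]; simp
  have h2 : U₀ t x 2 = (r:ℝ) ^ (-β) * ∑ i ∈ Finset.Icc 1 r,
      kmag i ^ α * Real.exp (-(kmag i ^ (2 * α)) * t) *
        Real.cos (∑ m, k i m * x m) := by
    rw [hcomp 2]; simp
  set A : ℝ := ∑ i ∈ Finset.Icc 1 r,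
      kmag i ^ α * Real.exp (-(kmag i ^ (2 * α)) * t) *
        Real.cos (∑ m, k i m * x m) with hAdef
  set B : ℝ := ∑ i ∈ Finset.Icc 1 r,
      kmag i ^ α * Real.exp (-((kmag i ^ 2 + 1) ^ α) * t) *
        Real.cos (∑ m, k' i m * x m) with hBdef
  have hsum_sq : (∑ p, U₀ t x p ^ 2) =
      ((r:ℝ) ^ (-β) * B) ^ 2 + ((r:ℝ) ^ (-β) * A) ^ 2 := by
    rw [Fin.sum_univ_three, h0, h1, h2]; ring
  have habsA : |A| ≤ ∑ i ∈ Finset.Icc 1 r,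
      kmag i ^ α * Real.exp (-(kmag i ^ (2*α)) * t) := by
    refine le_trans (Finset.abs_sum_le_sum_abs _ _) (Finset.sum_le_sum ?_)
    intro i _
    rw [abs_mul, abs_mul, abs_of_nonneg (hkα_pos i).le, abs_of_nonneg (Real.exp_pos _).le]
    calc kmag i ^ α * Real.exp (-(kmag i ^ (2*α)) * t) * |Real.cos (∑ m, k i m * x m)|
        ≤ kmag i ^ α * Real.exp (-(kmag i ^ (2*α)) * t) * 1 := by
          apply mul_le_mul_of_nonneg_left (Real.abs_cos_le_one _)
          exact mul_nonneg (hkα_pos i).le (Real.exp_pos _).le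
      _ = kmag i ^ α * Real.exp (-(kmag i ^ (2*α)) * t) := by ring
  have habsB : |B| ≤ ∑ i ∈ Finset.Icc 1 r,
      kmag i ^ α * Real.exp (-((kmag i ^ 2 + 1) ^ α) * t) := by
    refine le_trans (Finset.abs_sum_le_sum_abs _ _) (Finset.sum_le_sum ?_)
    intro i _
    rw [abs_mul, abs_mul, abs_of_nonneg (hkα_pos i).le, abs_of_nonneg (Real.exp_pos _).le]
    calc kmag i ^ α * Real.exp (-((kmag i ^ 2 + 1) ^ α) * t) * |Real.cos (∑ m, k' i m * x m)|
        ≤ kmag i ^ α * Real.exp (-((kmag i ^ 2 + 1) ^ α) * t) * 1 := by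
          apply mul_le_mul_of_nonneg_left (Real.abs_cos_le_one _)
          exact mul_nonneg (hkα_pos i).le (Real.exp_pos _).le
      _ = kmag i ^ α * Real.exp (-((kmag i ^ 2 + 1) ^ α) * t) := by ring
  have hABsum : |A| + |B| ≤ ∑ i ∈ Finset.Icc 1 r,
      kmag i ^ α * (Real.exp (-(kmag i ^ (2 * α)) * t) +
        Real.exp (-((kmag i ^ 2 + 1) ^ α) * t)) := by
    have hdist : ∑ i ∈ Finset.Icc 1 r, kmag i ^ α * (Real.exp (-(kmag i ^ (2*α)) * t) +
        Real.exp (-((kmag i ^ 2 + 1) ^ α) * t))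
        = (∑ i ∈ Finset.Icc 1 r, kmag i ^ α * Real.exp (-(kmag i ^ (2*α)) * t))
          + ∑ i ∈ Finset.Icc 1 r, kmag i ^ α * Real.exp (-((kmag i ^ 2 + 1) ^ α) * t) := by
      rw [← Finset.sum_add_distrib]
      exact Finset.sum_congr rfl fun i _ => by ring
    rw [hdist]
    linarith
  have hineq1 : Real.sqrt (∑ p, U₀ t x p ^ 2) ≤ (r:ℝ) ^ (-β) *
      ∑ i ∈ Finset.Icc 1 r,
        kmag i ^ α * (Real.exp (-(kmag i ^ (2 * α)) * t) +
          Real.exp (-((kmag i ^ 2 + 1) ^ α) * t)) := by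
    rw [hsum_sq]
    have hsq : ((r:ℝ) ^ (-β) * B) ^ 2 + ((r:ℝ) ^ (-β) * A) ^ 2
        ≤ ((r:ℝ) ^ (-β) * (|A| + |B|)) ^ 2 := by
      have hA2 : A ^ 2 = |A| ^ 2 := (sq_abs A).symm
      have hB2 : B ^ 2 = |B| ^ 2 := (sq_abs B).symm
      have h3 : 0 ≤ |A| * |B| := mul_nonneg (abs_nonneg A) (abs_nonneg B)
      nlinarith [sq_nonneg ((r:ℝ) ^ (-β)), mul_nonneg (mul_nonneg hrβ hrβ) h3]
    calc Real.sqrt (((r:ℝ) ^ (-β) * B) ^ 2 + ((r:ℝ) ^ (-β) * A) ^ 2)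
        ≤ Real.sqrt (((r:ℝ) ^ (-β) * (|A| + |B|)) ^ 2) := Real.sqrt_le_sqrt hsq
      _ = (r:ℝ) ^ (-β) * (|A| + |B|) :=
          Real.sqrt_sq (mul_nonneg hrβ (by positivity))
      _ ≤ _ := mul_le_mul_of_nonneg_left hABsum hrβ
  refine ⟨hineq1, hineq2, ?_⟩
  -- third inequality
  have htpos : 0 < t ^ ((1:ℝ)/2) := Real.rpow_pos_of_pos ht _
  have hcancel : t ^ ((1:ℝ)/2) * t ^ (-(1/2:ℝ)) = 1 := by
    rw [← Real.rpow_add ht]; norm_num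
  calc t ^ ((1:ℝ)/2) * Real.sqrt (∑ p, U₀ t x p ^ 2)
      ≤ t ^ ((1:ℝ)/2) * ((r:ℝ) ^ (-β) *
          ∑ i ∈ Finset.Icc 1 r,
            kmag i ^ α * (Real.exp (-(kmag i ^ (2 * α)) * t) +
              Real.exp (-((kmag i ^ 2 + 1) ^ α) * t))) :=
        mul_le_mul_of_nonneg_left hineq1 htpos.le
    _ ≤ t ^ ((1:ℝ)/2) * (8 * (r:ℝ) ^ (-β) * t ^ (-(1/2:ℝ))) :=
        mul_le_mul_of_nonneg_left hineq2 htpos.le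
    _ = 8 * (r:ℝ) ^ (-β) * (t ^ ((1:ℝ)/2) * t ^ (-(1/2:ℝ))) := by ring
    _ = 8 * (r:ℝ) ^ (-β) := by rw [hcancel]; ring
end

section
/- With the wave-vector setup in the context, define φ(t) = Σ_{i=1}^r |k_i|^{2α} ∫_0^t e^{−(|k_i|^{2α}+|k_i'|^{2α})τ} e^{−(t−τ)} dτ and u₁₀(t,x) = −(r^{−2β}/2) φ(t) sin(x₃) v'. Then there exist constants C ≥ c > 0 depending only on α (independent of r, K, t, β) such that: (i) sup_{x∈ℝ³} |u₁₀(t,x)| ≤ C r^{1−2β} for all t > 0; and (ii) sup_{x∈ℝ³} |u₁₀(t,x)| ≥ c r^{1−2β} for all t with K^{−2α} ≤ t ≤ 1. -/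
open Real intervalIntegral

lemma int_exp_mul' (c t : ℝ) (hc : c ≠ 0) :
    ∫ τ in (0:ℝ)..t, Real.exp (c * τ) = (Real.exp (c * t) - 1) / c := by
  rw [intervalIntegral.integral_comp_mul_left (fun x => Real.exp x) hc]
  simp [integral_exp, div_eq_inv_mul]

lemma key_int' (b t : ℝ) (hb : 2 ≤ b) :
    ∫ τ in (0:ℝ)..t, Real.exp (-b * τ) * Real.exp (-(t - τ))
      = Real.exp (-t) * ((1 - Real.exp (-((b - 1) * t))) / (b - 1)) := by
  have h1 : ∀ τ : ℝ, Real.exp (-b * τ) * Real.exp (-(t - τ))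
      = Real.exp (-t) * Real.exp ((1 - b) * τ) := by
    intro τ; rw [← Real.exp_add, ← Real.exp_add]; ring_nf
  simp only [h1]
  rw [intervalIntegral.integral_const_mul, int_exp_mul' (1 - b) t (by linarith)]
  congr 1
  have h2 : (1 - b) * t = -((b - 1) * t) := by ring
  rw [h2, show (1 - b : ℝ) = -(b - 1) by ring, div_neg, ← neg_div, neg_sub]

lemma term_upper (a b t : ℝ) (ha : 1 ≤ a) (hab : a ≤ b - 1) (hb : 2 ≤ b) (ht : 0 ≤ t) :
    a * (Real.exp (-t) * ((1 - Real.exp (-((b - 1) * t))) / (b - 1))) ≤ 1 := by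
  have hE1 : Real.exp (-t) ≤ 1 := Real.exp_le_one_iff.mpr (by linarith)
  have hE2 : 0 < Real.exp (-((b - 1) * t)) := Real.exp_pos _
  have hb1 : (0:ℝ) < b - 1 := by linarith
  calc a * (Real.exp (-t) * ((1 - Real.exp (-((b - 1) * t))) / (b - 1)))
      ≤ a * (1 * (1 / (b - 1))) := by
        have hE2' : Real.exp (-((b - 1) * t)) ≤ 1 :=
          Real.exp_le_one_iff.mpr (by nlinarith)
        have hX1 : (1 - Real.exp (-((b - 1) * t))) / (b - 1) ≤ 1 / (b - 1) := by
          gcongr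
          linarith
        have hX0 : 0 ≤ (1 - Real.exp (-((b - 1) * t))) / (b - 1) :=
          div_nonneg (by linarith) (by linarith)
        exact mul_le_mul_of_nonneg_left
          (mul_le_mul hE1 hX1 hX0 (by norm_num)) (by linarith)
    _ = a / (b - 1) := by ring
    _ ≤ 1 := by rw [div_le_one hb1]; linarith

lemma term_lower (a b t D : ℝ) (ha : 0 < a) (hab : a ≤ b - 1) (hb : 2 ≤ b)
    (hbD : b - 1 ≤ D * a) (hD : 0 < D) (hbt : 1 ≤ (b - 1) * t) (ht1 : t ≤ 1) (ht0 : 0 ≤ t) :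
    Real.exp (-1) * (1 - Real.exp (-1)) / D
      ≤ a * (Real.exp (-t) * ((1 - Real.exp (-((b - 1) * t))) / (b - 1))) := by
  have hb1 : (0:ℝ) < b - 1 := by linarith
  have hE1 : Real.exp (-1) ≤ Real.exp (-t) := Real.exp_le_exp.mpr (by linarith)
  have hE2 : Real.exp (-((b - 1) * t)) ≤ Real.exp (-1) := Real.exp_le_exp.mpr (by linarith)
  have hE3 : Real.exp (-1) < 1 := by
    have := Real.exp_lt_exp.mpr (show (-1:ℝ) < 0 by norm_num)
    simpa using this
  calc Real.exp (-1) * (1 - Real.exp (-1)) / D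
      = Real.exp (-1) * ((1 - Real.exp (-1)) * (1 / D)) := by ring
    _ ≤ Real.exp (-t) * ((1 - Real.exp (-((b - 1) * t))) * (a / (b - 1))) := by
        have h4 : 1 / D ≤ a / (b - 1) := by
          rw [div_le_div_iff₀ hD hb1]; nlinarith
        gcongr <;> nlinarith [one_div_pos.mpr hD]
    _ = a * (Real.exp (-t) * ((1 - Real.exp (-((b - 1) * t))) / (b - 1))) := by ring


/-- The resonant part `u₁₀(t,x) = -(r^{-2β}/2) φ(t) sin(x₃) v'` of the second Picard iterate,
where `φ(t) = ∑_i |k_i|^{2α} ∫_0^t e^{-(|k_i|^{2α}+|k_i'|^{2α})τ} e^{-(t-τ)} dτ`, satisfies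
`sup_x |u₁₀(t,x)| ≤ C r^{1-2β}` for all `t > 0` and
`sup_x |u₁₀(t,x)| ≥ c r^{1-2β}` for `K^{-2α} ≤ t ≤ 1`, with `c, C` depending only on `α`. -/
theorem stmt_8 (α : ℝ) (hα : 1 ≤ α) :
    ∃ c C : ℝ, 0 < c ∧ c ≤ C ∧
      ∀ r : ℕ, 1 ≤ r → ∀ K β : ℝ, 1 ≤ K → 0 < β →
      ∀ kmag : ℕ → ℝ, (∀ i, kmag i = (2:ℝ) ^ (i - 1) * K) →
      ∀ φ : ℝ → ℝ,
        (∀ t, φ t = ∑ i ∈ Finset.Icc 1 r, kmag i ^ (2 * α) *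
          ∫ τ in (0:ℝ)..t,
            Real.exp (-(kmag i ^ (2 * α) + (kmag i ^ 2 + 1) ^ α) * τ) *
              Real.exp (-(t - τ))) →
      ∀ u₁₀ : ℝ → (Fin 3 → ℝ) → Fin 3 → ℝ,
        (∀ t x, u₁₀ t x =
          (-((r:ℝ) ^ (-(2 * β)) / 2) * φ t * Real.sin (x 2)) • (![0, 1, 0] : Fin 3 → ℝ)) →
        -- (i) upper bound for all t > 0
        (∀ t : ℝ, 0 < t → ∀ x : Fin 3 → ℝ,
          Real.sqrt (∑ p, u₁₀ t x p ^ 2) ≤ C * (r:ℝ) ^ (1 - 2 * β)) ∧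
        -- (ii) lower bound on the sup for K^{-2α} ≤ t ≤ 1
        (∀ t : ℝ, K ^ (-(2 * α)) ≤ t → t ≤ 1 →
          ∃ x : Fin 3 → ℝ,
            c * (r:ℝ) ^ (1 - 2 * β) ≤ Real.sqrt (∑ p, u₁₀ t x p ^ 2)) := by
  set D : ℝ := 1 + (2:ℝ) ^ α with hD_def
  have h2α : (2:ℝ) ≤ (2:ℝ) ^ α := by
    calc (2:ℝ) = (2:ℝ) ^ (1:ℝ) := (Real.rpow_one 2).symm
    _ ≤ (2:ℝ) ^ α := Real.rpow_le_rpow_of_exponent_le (by norm_num) hα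
  have hD : (3:ℝ) ≤ D := by simp only [hD_def]; linarith
  have hDpos : (0:ℝ) < D := by linarith
  have hE3 : Real.exp (-1) < 1 := by
    have := Real.exp_lt_exp.mpr (show (-1:ℝ) < 0 by norm_num)
    simpa using this
  have hEpos : 0 < Real.exp (-1) := Real.exp_pos _
  refine ⟨Real.exp (-1) * (1 - Real.exp (-1)) / (2 * D), 1, ?_, ?_, ?_⟩
  · exact div_pos (mul_pos hEpos (by linarith)) (by linarith)
  · rw [div_le_one (by positivity)]; nlinarith
  intro r hr K β hK hβ kmag hkmag φ hφ u₁₀ hu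
  have hrpos : (0:ℝ) < (r:ℝ) := by exact_mod_cast hr
  set q : ℝ := (r:ℝ) ^ (-(2 * β)) with hq_def
  have hqpos : 0 < q := Real.rpow_pos_of_pos hrpos _
  have hrq : (r:ℝ) ^ (1 - 2 * β) = (r:ℝ) * q := by
    rw [hq_def, show (1 - 2 * β) = 1 + (-(2 * β)) by ring, Real.rpow_add hrpos,
      Real.rpow_one]
  -- per-index facts
  have hfact : ∀ i ∈ Finset.Icc 1 r,
      (1 ≤ kmag i ^ (2 * α)) ∧ (K ^ (2 * α) ≤ kmag i ^ (2 * α)) ∧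
      (kmag i ^ (2 * α) ≤ kmag i ^ (2 * α) + (kmag i ^ 2 + 1) ^ α - 1) ∧
      (2 ≤ kmag i ^ (2 * α) + (kmag i ^ 2 + 1) ^ α) ∧
      (kmag i ^ (2 * α) + (kmag i ^ 2 + 1) ^ α - 1 ≤ D * kmag i ^ (2 * α)) := by
    intro i hi
    have hkK : K ≤ kmag i := by
      rw [hkmag i]
      have h1 : (1:ℝ) ≤ (2:ℝ) ^ (i - 1) := one_le_pow₀ (by norm_num)
      nlinarith
    have hk1 : (1:ℝ) ≤ kmag i := le_trans hK hkK
    have hk0 : (0:ℝ) ≤ kmag i := by linarith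
    have ha1 : (1:ℝ) ≤ kmag i ^ (2 * α) := by
      calc (1:ℝ) = (1:ℝ) ^ (2 * α) := (Real.one_rpow _).symm
      _ ≤ kmag i ^ (2 * α) := Real.rpow_le_rpow (by norm_num) hk1 (by positivity)
    have haK : K ^ (2 * α) ≤ kmag i ^ (2 * α) :=
      Real.rpow_le_rpow (by linarith) hkK (by positivity)
    have hsq : (kmag i ^ 2 : ℝ) ^ α = kmag i ^ (2 * α) := by
      rw [← Real.rpow_natCast (kmag i) 2, ← Real.rpow_mul hk0]
      norm_num
    have hc1 : (1:ℝ) ≤ (kmag i ^ 2 + 1) ^ α := by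
      calc (1:ℝ) = (1:ℝ) ^ α := (Real.one_rpow _).symm
      _ ≤ (kmag i ^ 2 + 1) ^ α := Real.rpow_le_rpow (by norm_num) (by nlinarith) (by positivity)
    have hc2 : (kmag i ^ 2 + 1) ^ α ≤ (2:ℝ) ^ α * kmag i ^ (2 * α) := by
      calc (kmag i ^ 2 + 1) ^ α ≤ (2 * kmag i ^ 2) ^ α :=
            Real.rpow_le_rpow (by positivity) (by nlinarith) (by positivity)
      _ = (2:ℝ) ^ α * (kmag i ^ 2 : ℝ) ^ α := Real.mul_rpow (by norm_num) (by positivity)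
      _ = (2:ℝ) ^ α * kmag i ^ (2 * α) := by rw [hsq]
    refine ⟨ha1, haK, by linarith, by linarith, by simp only [hD_def]; nlinarith⟩
  -- norm formula
  have hnorm : ∀ t x, Real.sqrt (∑ p, u₁₀ t x p ^ 2)
      = q / 2 * |φ t| * |Real.sin (x 2)| := by
    intro t x
    rw [hu]
    have hsum : ∑ p, (((-(q / 2) * φ t * Real.sin (x 2)) • (![0, 1, 0] : Fin 3 → ℝ)) p) ^ 2
        = (-(q / 2) * φ t * Real.sin (x 2)) ^ 2 := by
      simp [Fin.sum_univ_three]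
    rw [show -(((r:ℝ)) ^ (-(2 * β)) / 2) = -(q / 2) by rw [hq_def], hsum,
      Real.sqrt_sq_eq_abs, abs_mul, abs_mul, abs_neg, abs_div]
    rw [abs_of_nonneg (le_of_lt hqpos)]
    norm_num
  constructor
  · -- upper bound
    intro t ht x
    rw [hnorm]
    have hφub : φ t ≤ r := by
      rw [hφ]
      calc (∑ i ∈ Finset.Icc 1 r, kmag i ^ (2 * α) *
            ∫ τ in (0:ℝ)..t,
              Real.exp (-(kmag i ^ (2 * α) + (kmag i ^ 2 + 1) ^ α) * τ) *
                Real.exp (-(t - τ)))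
          ≤ ∑ i ∈ Finset.Icc 1 r, (1:ℝ) := by
            apply Finset.sum_le_sum
            intro i hi
            obtain ⟨ha1, _, hab, hb2, _⟩ := hfact i hi
            rw [key_int' _ t hb2]
            exact term_upper _ _ t ha1 hab hb2 (le_of_lt ht)
        _ = (r:ℝ) := by
            rw [Finset.sum_const, Nat.card_Icc]
            simp
    have hφlb : 0 ≤ φ t := by
      rw [hφ]
      apply Finset.sum_nonneg
      intro i hi
      obtain ⟨ha1, _, hab, hb2, _⟩ := hfact i hi
      rw [key_int' _ t hb2]
      have hE2 : Real.exp (-((kmag i ^ (2 * α) + (kmag i ^ 2 + 1) ^ α - 1) * t)) ≤ 1 :=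
        Real.exp_le_one_iff.mpr (by nlinarith)
      have hpos : (0:ℝ) < kmag i ^ (2 * α) + (kmag i ^ 2 + 1) ^ α - 1 := by linarith
      exact mul_nonneg (by linarith) (mul_nonneg (Real.exp_pos _).le
        (div_nonneg (by linarith) (by linarith)))
    rw [abs_of_nonneg hφlb, hrq]
    have hs : |Real.sin (x 2)| ≤ 1 := abs_sin_le_one _
    have h1 : q / 2 * φ t * |Real.sin (x 2)| ≤ q / 2 * (r:ℝ) * 1 := by
      apply mul_le_mul _ hs (abs_nonneg _) (by positivity)
      apply mul_le_mul_of_nonneg_left hφub (by positivity)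
    have h2 : (0:ℝ) ≤ q * r := by positivity
    linarith
  · -- lower bound
    intro t ht1 ht2
    have hKpos : (0:ℝ) < K := by linarith
    have htpos : 0 < t := lt_of_lt_of_le (Real.rpow_pos_of_pos hKpos _) ht1
    refine ⟨![0, 0, Real.pi / 2], ?_⟩
    have hx2 : (![0, 0, Real.pi / 2] : Fin 3 → ℝ) 2 = Real.pi / 2 := rfl
    rw [hnorm, hx2, Real.sin_pi_div_two, abs_one, mul_one]
    have hφlb : Real.exp (-1) * (1 - Real.exp (-1)) / D * r ≤ φ t := by
      rw [hφ]
      calc Real.exp (-1) * (1 - Real.exp (-1)) / D * r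
          = ∑ i ∈ Finset.Icc 1 r, Real.exp (-1) * (1 - Real.exp (-1)) / D := by
            rw [Finset.sum_const, Nat.card_Icc]
            simp [mul_comm]
        _ ≤ _ := by
            apply Finset.sum_le_sum
            intro i hi
            obtain ⟨ha1, haK, hab, hb2, hbD⟩ := hfact i hi
            rw [key_int' _ t hb2]
            apply term_lower _ _ _ _ (by linarith) hab hb2 hbD hDpos ?_ ht2 (le_of_lt htpos)
            -- (b-1)*t ≥ 1
            have h1 : K ^ (2 * α) * K ^ (-(2 * α)) = 1 := by
              rw [← Real.rpow_add hKpos]; simp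
            have hKa : 0 < K ^ (2 * α) := Real.rpow_pos_of_pos hKpos _
            calc (1:ℝ) = K ^ (2 * α) * K ^ (-(2 * α)) := h1.symm
              _ ≤ (kmag i ^ (2 * α) + (kmag i ^ 2 + 1) ^ α - 1) * t := by
                  apply mul_le_mul (by linarith) ht1 (le_of_lt (Real.rpow_pos_of_pos hKpos _))
                  linarith
    rw [hrq]
    have hlbpos : 0 < Real.exp (-1) * (1 - Real.exp (-1)) / D * (r:ℝ) :=
      mul_pos (div_pos (mul_pos hEpos (by linarith)) hDpos) hrpos
    have habs : |φ t| = φ t := abs_of_nonneg (by linarith)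
    rw [habs]
    have hDne : D ≠ 0 := ne_of_gt hDpos
    calc Real.exp (-1) * (1 - Real.exp (-1)) / (2 * D) * ((r:ℝ) * q)
        = q / 2 * (Real.exp (-1) * (1 - Real.exp (-1)) / D * (r:ℝ)) := by
          field_simp
      _ ≤ q / 2 * φ t := by gcongr
end

section
/- With the wave-vector setup in the context, define for t > 0 and x ∈ ℝ³: u₁₁(t,x) = (r^{−2β}/2) Σ_{1≤i≠j≤r} |k_i|^α |k_j|^α ( ∫_0^t e^{−(|k_i|^{2α}+|k_j'|^{2α})τ} e^{−|k_j'−k_i|^{2α}(t−τ)} dτ ) sin((k_j'−k_i)·x) v'. Then there exists a constant C depending only on α (independent of r, K, t, β) such that sup_{x∈ℝ³} |u₁₁(t,x)| ≤ C r^{−2β} for all t > 0. -/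
open Finset


open Finset

private lemma sum_pow_le_two (c : ℝ) (h0 : 0 ≤ c) (h1 : c ≤ 2⁻¹)
    (S : Finset ℕ) (e : ℕ → ℕ) (he : ∀ a ∈ S, ∀ b ∈ S, e a = e b → a = b) :
    ∑ q ∈ S, c ^ (e q) ≤ 2 := by
  have h2 : c < 1 := lt_of_le_of_lt h1 (by norm_num)
  have hsum : Summable (fun k : ℕ => c ^ k) := summable_geometric_of_lt_one h0 h2
  have him : ∑ q ∈ S, c ^ (e q) = ∑ k ∈ S.image e, c ^ k :=
    (Finset.sum_image he).symm
  rw [him]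
  calc ∑ k ∈ S.image e, c ^ k ≤ ∑' k, c ^ k :=
        Summable.sum_le_tsum _ (fun k _ => pow_nonneg h0 k) hsum
    _ = (1 - c)⁻¹ := tsum_geometric_of_lt_one h0 h2
    _ ≤ 2 := by
        have h3 : (2:ℝ)⁻¹ ≤ 1 - c := by linarith
        calc (1 - c)⁻¹ ≤ ((2:ℝ)⁻¹)⁻¹ := by
              apply inv_anti₀ (by norm_num) h3
          _ = 2 := by norm_num

private lemma sum_min_geom_le (x : ℝ) (hx : 0 < x) (r : ℕ) :
    ∑ q ∈ Finset.Icc 1 r, min (x * 4 ^ q) (x * 4 ^ q)⁻¹ ≤ 4 := by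
  set n : ℤ := Int.log 4 x⁻¹ with hn
  have hb : (1:ℕ) < 4 := by norm_num
  have h1 : ((4:ℝ)) ^ n ≤ x⁻¹ := by
    have h := Int.zpow_log_le_self hb (inv_pos.mpr hx)
    push_cast at h
    exact h
  have h2 : x⁻¹ < (4:ℝ) ^ (n + 1) := by
    have h := Int.lt_zpow_succ_log_self hb x⁻¹
    push_cast at h
    exact h
  have h40 : (0:ℝ) < 4 := by norm_num
  have key1 : ∀ q : ℕ, (q:ℤ) ≤ n →
      min (x * 4 ^ q) (x * 4 ^ q)⁻¹ ≤ ((4:ℝ)⁻¹) ^ ((n - q).toNat) := by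
    intro q hq
    have hxle : x ≤ (4:ℝ) ^ (-n) := by
      rw [zpow_neg, ← inv_inv x]
      exact inv_anti₀ (zpow_pos h40 n) h1
    have hle : x * 4 ^ q ≤ (4:ℝ) ^ (-n) * 4 ^ (q:ℤ) := by
      rw [zpow_natCast]
      exact mul_le_mul_of_nonneg_right hxle (by positivity)
    have heq : ((4:ℝ)⁻¹) ^ ((n - q).toNat) = (4:ℝ) ^ (-n) * 4 ^ (q:ℤ) := by
      rw [← zpow_natCast ((4:ℝ)⁻¹), Int.toNat_of_nonneg (by omega : (0:ℤ) ≤ n - q),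
        inv_zpow, ← zpow_neg, neg_sub, sub_eq_add_neg,
        zpow_add₀ (by norm_num : (4:ℝ) ≠ 0), mul_comm]
    rw [heq]
    exact le_trans (min_le_left _ _) hle
  have key2 : ∀ q : ℕ, n < (q:ℤ) →
      min (x * 4 ^ q) (x * 4 ^ q)⁻¹ ≤ ((4:ℝ)⁻¹) ^ (((q:ℤ) - n - 1).toNat) := by
    intro q hq
    have hxgt : (4:ℝ) ^ (-(n+1)) < x := by
      rw [zpow_neg, ← inv_inv x]
      exact inv_strictAnti₀ (inv_pos.mpr hx) h2
    have hgt : (4:ℝ) ^ ((q:ℤ) - n - 1) < x * 4 ^ q := by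
      calc (4:ℝ) ^ ((q:ℤ) - n - 1) = (4:ℝ) ^ (-(n+1)) * 4 ^ (q:ℤ) := by
            rw [← zpow_add₀ (by norm_num : (4:ℝ) ≠ 0)]
            congr 1
            ring
        _ < x * 4 ^ (q:ℤ) := by
            apply mul_lt_mul_of_pos_right hxgt (zpow_pos h40 _)
        _ = x * 4 ^ q := by rw [zpow_natCast]
    have hpos : (0:ℝ) < (4:ℝ) ^ ((q:ℤ) - n - 1) := zpow_pos h40 _
    have hinv : (x * 4 ^ q)⁻¹ ≤ ((4:ℝ) ^ ((q:ℤ) - n - 1))⁻¹ :=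
      inv_anti₀ hpos hgt.le
    have heq : ((4:ℝ)⁻¹) ^ (((q:ℤ) - n - 1).toNat) = ((4:ℝ) ^ ((q:ℤ) - n - 1))⁻¹ := by
      rw [← zpow_natCast ((4:ℝ)⁻¹), Int.toNat_of_nonneg (by omega : (0:ℤ) ≤ (q:ℤ) - n - 1),
        inv_zpow]
    rw [heq]
    exact le_trans (min_le_right _ _) hinv
  rw [← Finset.sum_filter_add_sum_filter_not (Finset.Icc 1 r) (fun q : ℕ => (q:ℤ) ≤ n)]
  have hpart1 : ∑ q ∈ (Finset.Icc 1 r).filter (fun q : ℕ => (q:ℤ) ≤ n),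
      min (x * 4 ^ q) (x * 4 ^ q)⁻¹ ≤ 2 := by
    calc _ ≤ ∑ q ∈ (Finset.Icc 1 r).filter (fun q : ℕ => (q:ℤ) ≤ n),
          ((4:ℝ)⁻¹) ^ ((n - q).toNat) := by
          apply Finset.sum_le_sum
          intro q hq
          exact key1 q (Finset.mem_filter.mp hq).2
      _ ≤ 2 := by
          apply sum_pow_le_two _ (by norm_num) (by norm_num)
          intro a ha b hb hab
          have ha' := (Finset.mem_filter.mp ha).2
          have hb' := (Finset.mem_filter.mp hb).2
          omega
  have hpart2 : ∑ q ∈ (Finset.Icc 1 r).filter (fun q : ℕ => ¬ ((q:ℤ) ≤ n)),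
      min (x * 4 ^ q) (x * 4 ^ q)⁻¹ ≤ 2 := by
    calc _ ≤ ∑ q ∈ (Finset.Icc 1 r).filter (fun q : ℕ => ¬ ((q:ℤ) ≤ n)),
          ((4:ℝ)⁻¹) ^ (((q:ℤ) - n - 1).toNat) := by
          apply Finset.sum_le_sum
          intro q hq
          exact key2 q (lt_of_not_ge (Finset.mem_filter.mp hq).2)
      _ ≤ 2 := by
          apply sum_pow_le_two _ (by norm_num) (by norm_num)
          intro a ha b hb hab
          have ha' := (Finset.mem_filter.mp ha).2
          have hb' := (Finset.mem_filter.mp hb).2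
          omega
  linarith


private lemma exp_integral_bound (A B m t : ℝ) (ht : 0 < t) (hmA : m ≤ A) (hmB : m ≤ B) :
    (∫ τ in (0:ℝ)..t, Real.exp (-A * τ) * Real.exp (-B * (t - τ)))
      ≤ Real.exp (-(m * t)) * t := by
  have hbound : ∀ τ ∈ Set.uIoc (0:ℝ) t,
      ‖Real.exp (-A * τ) * Real.exp (-B * (t - τ))‖ ≤ Real.exp (-(m * t)) := by
    intro τ hτ
    rw [Set.uIoc_of_le ht.le] at hτ
    obtain ⟨h1, h2⟩ := hτ
    rw [Real.norm_eq_abs, abs_of_pos (by positivity), ← Real.exp_add]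
    apply Real.exp_le_exp.mpr
    nlinarith [mul_le_mul_of_nonneg_right hmA h1.le,
      mul_le_mul_of_nonneg_right hmB (by linarith : (0:ℝ) ≤ t - τ)]
  have h := intervalIntegral.norm_integral_le_of_norm_le_const hbound
  rw [Real.norm_eq_abs] at h
  have h2 : |∫ τ in (0:ℝ)..t, Real.exp (-A * τ) * Real.exp (-B * (t - τ))|
      ≤ Real.exp (-(m * t)) * t := by
    calc |∫ τ in (0:ℝ)..t, Real.exp (-A * τ) * Real.exp (-B * (t - τ))|
        ≤ Real.exp (-(m * t)) * |t - 0| := h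
      _ = Real.exp (-(m * t)) * t := by rw [sub_zero, abs_of_pos ht]
  exact le_trans (le_abs_self _) h2

set_option maxHeartbeats 1000000

private lemma rpow_two_mul (X α : ℝ) (hX : 0 ≤ X) : X ^ (2 * α) = (X ^ 2) ^ α := by
  rw [Real.rpow_mul hX]
  norm_num

private lemma core (α K t : ℝ) (hα : 1 ≤ α) (hK : 1 ≤ K) (ht : 0 < t)
    (p q : ℕ) (hp : 1 ≤ p) (hpq : p < q) (A B : ℝ)
    (hA : ((2:ℝ) ^ (q - 2) * K) ^ (2 * α) ≤ A)
    (hB : ((2:ℝ) ^ (q - 2) * K) ^ (2 * α) ≤ B) :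
    ((2:ℝ) ^ (p - 1) * K) ^ α * ((2:ℝ) ^ (q - 1) * K) ^ α *
      ∫ τ in (0:ℝ)..t, Real.exp (-A * τ) * Real.exp (-B * (t - τ))
    ≤ (4:ℝ) ^ (α + 1) * ((2:ℝ)⁻¹) ^ (q - p) *
        min (K ^ 2 * t ^ (α⁻¹) / 16 * 4 ^ q) (K ^ 2 * t ^ (α⁻¹) / 16 * 4 ^ q)⁻¹ := by
  have hK0 : (0:ℝ) < K := lt_of_lt_of_le one_pos hK
  set μ : ℝ := ((2:ℝ) ^ (q - 2) * K) ^ (2 * α) with hμdef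
  have hμ0 : 0 < μ := Real.rpow_pos_of_pos (by positivity) _
  have hI0 : 0 ≤ ∫ τ in (0:ℝ)..t, Real.exp (-A * τ) * Real.exp (-B * (t - τ)) :=
    intervalIntegral.integral_nonneg ht.le (fun τ _ => by positivity)
  have hI : (∫ τ in (0:ℝ)..t, Real.exp (-A * τ) * Real.exp (-B * (t - τ)))
      ≤ Real.exp (-(μ * t)) * t := exp_integral_bound A B μ t ht hA hB
  -- P ≤ (2⁻¹)^(q-p) * (4^α * μ)
  have hfourμ : (4:ℝ) ^ α * μ = (((2:ℝ) ^ (q - 1) * K) ^ 2) ^ α := by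
    rw [hμdef, rpow_two_mul _ _ (by positivity), ← Real.mul_rpow (by norm_num) (by positivity)]
    congr 1
    have h1 : ((2:ℝ) ^ (q - 1)) = 2 * 2 ^ (q - 2) := by
      rw [← pow_succ']
      congr 1
      omega
    rw [h1]
    ring
  have hPeq : ((2:ℝ) ^ (p - 1) * K) ^ α * ((2:ℝ) ^ (q - 1) * K) ^ α
      = (((2:ℝ)⁻¹) ^ (q - p) : ℝ) ^ α * ((4:ℝ) ^ α * μ) := by
    rw [hfourμ]
    have e1 : ((2:ℝ) ^ (p - 1) * K) = ((2:ℝ)⁻¹) ^ (q - p) * ((2:ℝ) ^ (q - 1) * K) := by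
      have h : (2:ℝ) ^ (p - 1) * 2 ^ (q - p) = 2 ^ (q - 1) := by
        rw [← pow_add]
        congr 1
        omega
      rw [inv_pow, ← h]
      field_simp
    have hXX : (((2:ℝ) ^ (q - 1) * K) ^ 2) ^ α
        = ((2:ℝ) ^ (q - 1) * K) ^ α * ((2:ℝ) ^ (q - 1) * K) ^ α := by
      rw [sq, Real.mul_rpow (by positivity) (by positivity)]
    rw [e1, hXX, Real.mul_rpow (by positivity) (by positivity)]
    ring
  have hbase : (0:ℝ) < ((2:ℝ)⁻¹) ^ (q - p) := by positivity
  have hbase1 : ((2:ℝ)⁻¹) ^ (q - p) ≤ 1 := pow_le_one₀ (by norm_num) (by norm_num)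
  have hPle : ((2:ℝ) ^ (p - 1) * K) ^ α * ((2:ℝ) ^ (q - 1) * K) ^ α
      ≤ ((2:ℝ)⁻¹) ^ (q - p) * ((4:ℝ) ^ α * μ) := by
    rw [hPeq]
    apply mul_le_mul_of_nonneg_right _ (by positivity)
    calc (((2:ℝ)⁻¹) ^ (q - p) : ℝ) ^ α ≤ (((2:ℝ)⁻¹) ^ (q - p) : ℝ) ^ (1:ℝ) :=
          Real.rpow_le_rpow_of_exponent_ge hbase hbase1 hα
      _ = ((2:ℝ)⁻¹) ^ (q - p) := Real.rpow_one _
  -- combine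
  have step1 : ((2:ℝ) ^ (p - 1) * K) ^ α * ((2:ℝ) ^ (q - 1) * K) ^ α *
      (∫ τ in (0:ℝ)..t, Real.exp (-A * τ) * Real.exp (-B * (t - τ)))
      ≤ ((2:ℝ)⁻¹) ^ (q - p) * ((4:ℝ) ^ α * μ) * (Real.exp (-(μ * t)) * t) :=
    mul_le_mul hPle hI hI0 (by positivity)
  -- now bound μ t e^{-μt} ≤ 4 min b b⁻¹
  set b : ℝ := K ^ 2 * t ^ (α⁻¹) / 16 * 4 ^ q with hbdef
  have hb0 : 0 < b := by positivity
  have hbα : b ^ α = μ * t := by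
    have hb' : b = ((2:ℝ) ^ (q - 2) * K) ^ 2 * t ^ (α⁻¹) := by
      rw [hbdef]
      have h16 : ((2:ℝ) ^ (q - 2)) ^ 2 * 16 = 4 ^ q := by
        have h4 : (4:ℝ) ^ q = 2 ^ (2 * q) := by
          rw [show (4:ℝ) = 2 ^ 2 by norm_num, ← pow_mul]
        rw [h4, ← pow_mul, show (16:ℝ) = 2 ^ 4 by norm_num, ← pow_add]
        congr 1
        omega
      rw [← h16]
      ring
    rw [hb', Real.mul_rpow (by positivity) (by positivity), ← rpow_two_mul _ _ (by positivity),
      ← Real.rpow_mul ht.le, inv_mul_cancel₀ (by linarith : α ≠ 0), Real.rpow_one]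
  have hs0 : 0 < μ * t := by positivity
  have hs1 : μ * t * Real.exp (-(μ * t)) ≤ μ * t := by
    nlinarith [Real.exp_le_one_iff.mpr (by linarith : -(μ * t) ≤ 0)]
  have hs2 : μ * t * Real.exp (-(μ * t)) ≤ 4 / (μ * t) := by
    have hesq : Real.exp (μ * t) = Real.exp (μ * t / 2) * Real.exp (μ * t / 2) := by
      rw [← Real.exp_add]; ring_nf
    have hkey : (μ * t) ^ 2 ≤ 4 * Real.exp (μ * t) := by
      nlinarith [Real.add_one_le_exp (μ * t / 2), hs0.le]
    rw [le_div_iff₀ hs0, Real.exp_neg]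
    have hinv : (0:ℝ) ≤ (Real.exp (μ * t))⁻¹ := by positivity
    have := mul_le_mul_of_nonneg_right hkey hinv
    rw [mul_assoc, mul_inv_cancel₀ (Real.exp_pos _).ne', mul_one] at this
    nlinarith
  have hmin : μ * t * Real.exp (-(μ * t)) ≤ 4 * min b b⁻¹ := by
    rcases le_total b 1 with hb1 | hb1
    · have hble : μ * t ≤ b := by
        rw [← hbα]
        calc b ^ α ≤ b ^ (1:ℝ) := Real.rpow_le_rpow_of_exponent_ge hb0 hb1 hα
          _ = b := Real.rpow_one b
      have hbinv : b ≤ b⁻¹ := by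
        rw [← one_div, le_div_iff₀ hb0]
        nlinarith
      rw [min_eq_left hbinv]
      nlinarith
    · have hble : b ≤ μ * t := by
        rw [← hbα]
        calc b = b ^ (1:ℝ) := (Real.rpow_one b).symm
          _ ≤ b ^ α := Real.rpow_le_rpow_of_exponent_le hb1 hα
      have hbinv : b⁻¹ ≤ b := by
        have h1 : b⁻¹ ≤ 1 := inv_le_one_of_one_le₀ hb1
        linarith
      rw [min_eq_right hbinv]
      calc μ * t * Real.exp (-(μ * t)) ≤ 4 / (μ * t) := hs2
        _ ≤ 4 / b := by
            apply div_le_div_of_nonneg_left (by norm_num) hb0 hble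
        _ = 4 * b⁻¹ := by rw [div_eq_mul_inv]
  calc ((2:ℝ) ^ (p - 1) * K) ^ α * ((2:ℝ) ^ (q - 1) * K) ^ α *
      (∫ τ in (0:ℝ)..t, Real.exp (-A * τ) * Real.exp (-B * (t - τ)))
      ≤ ((2:ℝ)⁻¹) ^ (q - p) * ((4:ℝ) ^ α * μ) * (Real.exp (-(μ * t)) * t) := step1
    _ = ((2:ℝ)⁻¹) ^ (q - p) * (4:ℝ) ^ α * (μ * t * Real.exp (-(μ * t))) := by ring
    _ ≤ ((2:ℝ)⁻¹) ^ (q - p) * (4:ℝ) ^ α * (4 * min b b⁻¹) := by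
        apply mul_le_mul_of_nonneg_left hmin (by positivity)
    _ = (4:ℝ) ^ (α + 1) * ((2:ℝ)⁻¹) ^ (q - p) * min b b⁻¹ := by
        rw [Real.rpow_add (by norm_num : (0:ℝ) < 4), Real.rpow_one]
        ring

private lemma ite_smul_zero (P : Prop) [Decidable P] (a : ℝ) (v : Fin 3 → ℝ) :
    (if P then a • v else 0) = (if P then a else 0) • v := by
  split <;> simp

private lemma abs_mul_sin_le (a s : ℝ) (ha : 0 ≤ a) : |a * Real.sin s| ≤ a := by
  rw [abs_mul]
  calc |a| * |Real.sin s| ≤ |a| * 1 :=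
        mul_le_mul_of_nonneg_left (abs_le.mpr ⟨Real.neg_one_le_sin s, Real.sin_le_one s⟩)
          (abs_nonneg _)
    _ = a := by rw [mul_one, abs_of_nonneg ha]

/-- The difference-frequency part `u₁₁` of the second Picard iterate satisfies the uniform
bound `sup_x |u₁₁(t,x)| ≤ C r^{-2β}` for all `t > 0`, with `C` depending only on `α`. -/
theorem stmt_9 (α : ℝ) (hα : 1 ≤ α) :
    ∃ C : ℝ, 0 < C ∧
      ∀ r : ℕ, 1 ≤ r → ∀ K β : ℝ, 1 ≤ K → 0 < β →
      ∀ kmag : ℕ → ℝ, (∀ i, kmag i = (2:ℝ) ^ (i - 1) * K) →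
      ∀ k k' : ℕ → Fin 3 → ℝ,
        (∀ i, k i = ![kmag i, 0, 0]) → (∀ i, k' i = ![kmag i, 0, 1]) →
      ∀ u₁₁ : ℝ → (Fin 3 → ℝ) → Fin 3 → ℝ,
        (∀ t x, u₁₁ t x = ((r:ℝ) ^ (-(2 * β)) / 2) •
          ∑ i ∈ Finset.Icc 1 r, ∑ j ∈ Finset.Icc 1 r,
            if i ≠ j then
              ((kmag i ^ α * kmag j ^ α *
                  ∫ τ in (0:ℝ)..t,
                    Real.exp (-(kmag i ^ (2 * α) + (kmag j ^ 2 + 1) ^ α) * τ) *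
                      Real.exp (-(Real.sqrt (∑ m, (k' j m - k i m) ^ 2)) ^ (2 * α) *
                        (t - τ))) *
                Real.sin (∑ m, (k' j m - k i m) * x m)) • (![0, 1, 0] : Fin 3 → ℝ)
            else 0) →
        ∀ t : ℝ, 0 < t → ∀ x : Fin 3 → ℝ,
          Real.sqrt (∑ p, u₁₁ t x p ^ 2) ≤ C * (r:ℝ) ^ (-(2 * β)) := by
  refine ⟨8 * 4 ^ (α + 1), by positivity, ?_⟩
  intro r hr K β hK hβ kmag hkmag k k' hk hk' u₁₁ hu t ht x
  have hK0 : (0:ℝ) < K := lt_of_lt_of_le one_pos hK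
  have hα0 : (0:ℝ) ≤ α := by linarith
  have hx16 : (0:ℝ) < K ^ 2 * t ^ α⁻¹ / 16 := by positivity
  set M : ℕ → ℝ := fun q =>
    min (K ^ 2 * t ^ α⁻¹ / 16 * 4 ^ q) (K ^ 2 * t ^ α⁻¹ / 16 * 4 ^ q)⁻¹ with hM
  have hM0 : ∀ q, 0 ≤ M q := fun q => le_min (by positivity) (by positivity)
  have hMsum : ∑ q ∈ Finset.Icc 1 r, M q ≤ 4 := sum_min_geom_le _ hx16 r
  set G : ℕ → ℕ → ℝ := fun i j =>
    if i < j then (4:ℝ) ^ (α + 1) * ((2:ℝ)⁻¹) ^ (j - i) * M j else 0 with hG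
  have hG0 : ∀ i j, 0 ≤ G i j := by
    intro i j
    simp only [hG]
    by_cases h : i < j
    · rw [if_pos h]
      exact mul_nonneg (by positivity) (hM0 j)
    · rw [if_neg h]
  have key : ∀ i ∈ Finset.Icc 1 r, ∀ j ∈ Finset.Icc 1 r,
      |if i ≠ j then
          ((kmag i ^ α * kmag j ^ α *
              ∫ τ in (0:ℝ)..t,
                Real.exp (-(kmag i ^ (2 * α) + (kmag j ^ 2 + 1) ^ α) * τ) *
                  Real.exp (-(Real.sqrt (∑ m, (k' j m - k i m) ^ 2)) ^ (2 * α) *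
                    (t - τ))) *
            Real.sin (∑ m, (k' j m - k i m) * x m))
        else 0| ≤ G i j + G j i := by
    intro i hi j hj
    rw [Finset.mem_Icc] at hi hj
    by_cases hij : i = j
    · rw [if_neg (by simpa using hij)]
      simpa using add_nonneg (hG0 i j) (hG0 j i)
    · rw [if_pos hij]
      have hSsum : (∑ m, (k' j m - k i m) ^ 2)
          = ((2:ℝ) ^ (j - 1) * K - 2 ^ (i - 1) * K) ^ 2 + 1 := by
        rw [hk' j, hk i, Fin.sum_univ_three]
        simp [hkmag]
      rw [hSsum, hkmag i, hkmag j]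
      refine le_trans (abs_mul_sin_le _ _ (mul_nonneg (by positivity)
        (intervalIntegral.integral_nonneg ht.le (fun τ _ => by positivity)))) ?_
      rcases lt_or_gt_of_ne hij with hlt | hgt
      · -- i < j
        have hA : ((2:ℝ) ^ (j - 2) * K) ^ (2 * α)
            ≤ ((2:ℝ) ^ (i - 1) * K) ^ (2 * α) + (((2:ℝ) ^ (j - 1) * K) ^ 2 + 1) ^ α := by
          have h1 : ((2:ℝ) ^ (j - 2) * K) ^ (2 * α) = (((2:ℝ) ^ (j - 2) * K) ^ 2) ^ α :=
            rpow_two_mul _ _ (by positivity)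
          have h2 : (((2:ℝ) ^ (j - 2) * K) ^ 2) ^ α ≤ (((2:ℝ) ^ (j - 1) * K) ^ 2 + 1) ^ α := by
            apply Real.rpow_le_rpow (by positivity) _ hα0
            have hpow : (2:ℝ) ^ (j - 2) ≤ 2 ^ (j - 1) :=
              pow_le_pow_right₀ (by norm_num) (by omega)
            have hsq := pow_le_pow_left₀ (by positivity : (0:ℝ) ≤ (2:ℝ) ^ (j - 2) * K)
              (mul_le_mul_of_nonneg_right hpow hK0.le) 2
            linarith
          have h3 : 0 ≤ ((2:ℝ) ^ (i - 1) * K) ^ (2 * α) := Real.rpow_nonneg (by positivity) _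
          rw [h1]
          linarith
        have hB : ((2:ℝ) ^ (j - 2) * K) ^ (2 * α)
            ≤ (Real.sqrt (((2:ℝ) ^ (j - 1) * K - 2 ^ (i - 1) * K) ^ 2 + 1)) ^ (2 * α) := by
          rw [rpow_two_mul _ _ (Real.sqrt_nonneg _), Real.sq_sqrt (by positivity),
            rpow_two_mul _ _ (by positivity)]
          apply Real.rpow_le_rpow (by positivity) _ hα0
          have hpow : (2:ℝ) ^ (i - 1) ≤ 2 ^ (j - 2) :=
            pow_le_pow_right₀ (by norm_num) (by omega)
          have h2 : (2:ℝ) ^ (j - 1) = 2 ^ (j - 2) * 2 := by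
            rw [← pow_succ]
            congr 1
            omega
          have hstep : (2:ℝ) ^ (j - 2) * K ≤ 2 ^ (j - 1) * K - 2 ^ (i - 1) * K := by
            rw [h2]
            nlinarith [mul_le_mul_of_nonneg_right hpow hK0.le]
          have hsq2 := pow_le_pow_left₀ (by positivity : (0:ℝ) ≤ (2:ℝ) ^ (j - 2) * K) hstep 2
          linarith
        have hc := core α K t hα hK ht i j (by omega) hlt _ _ hA hB
        calc ((2:ℝ) ^ (i - 1) * K) ^ α * ((2:ℝ) ^ (j - 1) * K) ^ α *
              ∫ τ in (0:ℝ)..t,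
                Real.exp (-(((2:ℝ) ^ (i - 1) * K) ^ (2 * α) +
                    (((2:ℝ) ^ (j - 1) * K) ^ 2 + 1) ^ α) * τ) *
                  Real.exp (-(Real.sqrt (((2:ℝ) ^ (j - 1) * K - 2 ^ (i - 1) * K) ^ 2 + 1))
                      ^ (2 * α) * (t - τ))
            ≤ (4:ℝ) ^ (α + 1) * ((2:ℝ)⁻¹) ^ (j - i) *
              min (K ^ 2 * t ^ α⁻¹ / 16 * 4 ^ j) (K ^ 2 * t ^ α⁻¹ / 16 * 4 ^ j)⁻¹ := hc
          _ = G i j := by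
              simp only [hG, hM]
              rw [if_pos hlt]
          _ ≤ G i j + G j i := le_add_of_nonneg_right (hG0 j i)
      · -- j < i
        have hA : ((2:ℝ) ^ (i - 2) * K) ^ (2 * α)
            ≤ ((2:ℝ) ^ (i - 1) * K) ^ (2 * α) + (((2:ℝ) ^ (j - 1) * K) ^ 2 + 1) ^ α := by
          have h1 : ((2:ℝ) ^ (i - 2) * K) ^ (2 * α) ≤ ((2:ℝ) ^ (i - 1) * K) ^ (2 * α) := by
            apply Real.rpow_le_rpow (by positivity) _ (by positivity)
            have hpow : (2:ℝ) ^ (i - 2) ≤ 2 ^ (i - 1) :=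
              pow_le_pow_right₀ (by norm_num) (by omega)
            exact mul_le_mul_of_nonneg_right hpow hK0.le
          have h2 : 0 ≤ (((2:ℝ) ^ (j - 1) * K) ^ 2 + 1) ^ α := Real.rpow_nonneg (by positivity) _
          linarith
        have hB : ((2:ℝ) ^ (i - 2) * K) ^ (2 * α)
            ≤ (Real.sqrt (((2:ℝ) ^ (j - 1) * K - 2 ^ (i - 1) * K) ^ 2 + 1)) ^ (2 * α) := by
          rw [rpow_two_mul _ _ (Real.sqrt_nonneg _), Real.sq_sqrt (by positivity),
            rpow_two_mul _ _ (by positivity)]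
          apply Real.rpow_le_rpow (by positivity) _ hα0
          have hpow : (2:ℝ) ^ (j - 1) ≤ 2 ^ (i - 2) :=
            pow_le_pow_right₀ (by norm_num) (by omega)
          have h2 : (2:ℝ) ^ (i - 1) = 2 ^ (i - 2) * 2 := by
            rw [← pow_succ]
            congr 1
            omega
          have hstep : (2:ℝ) ^ (i - 2) * K ≤ 2 ^ (i - 1) * K - 2 ^ (j - 1) * K := by
            rw [h2]
            nlinarith [mul_le_mul_of_nonneg_right hpow hK0.le]
          have hsq2 := pow_le_pow_left₀ (by positivity : (0:ℝ) ≤ (2:ℝ) ^ (i - 2) * K) hstep 2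
          have hflip : ((2:ℝ) ^ (i - 1) * K - 2 ^ (j - 1) * K) ^ 2
              = ((2:ℝ) ^ (j - 1) * K - 2 ^ (i - 1) * K) ^ 2 := by ring
          linarith [hflip ▸ hsq2]
        have hc := core α K t hα hK ht j i (by omega) hgt _ _ hA hB
        calc ((2:ℝ) ^ (i - 1) * K) ^ α * ((2:ℝ) ^ (j - 1) * K) ^ α *
              ∫ τ in (0:ℝ)..t,
                Real.exp (-(((2:ℝ) ^ (i - 1) * K) ^ (2 * α) +
                    (((2:ℝ) ^ (j - 1) * K) ^ 2 + 1) ^ α) * τ) *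
                  Real.exp (-(Real.sqrt (((2:ℝ) ^ (j - 1) * K - 2 ^ (i - 1) * K) ^ 2 + 1))
                      ^ (2 * α) * (t - τ))
            = ((2:ℝ) ^ (j - 1) * K) ^ α * ((2:ℝ) ^ (i - 1) * K) ^ α *
              ∫ τ in (0:ℝ)..t,
                Real.exp (-(((2:ℝ) ^ (i - 1) * K) ^ (2 * α) +
                    (((2:ℝ) ^ (j - 1) * K) ^ 2 + 1) ^ α) * τ) *
                  Real.exp (-(Real.sqrt (((2:ℝ) ^ (j - 1) * K - 2 ^ (i - 1) * K) ^ 2 + 1))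
                      ^ (2 * α) * (t - τ)) := by ring
          _ ≤ (4:ℝ) ^ (α + 1) * ((2:ℝ)⁻¹) ^ (i - j) *
              min (K ^ 2 * t ^ α⁻¹ / 16 * 4 ^ i) (K ^ 2 * t ^ α⁻¹ / 16 * 4 ^ i)⁻¹ := hc
          _ = G j i := by
              simp only [hG, hM]
              rw [if_pos hgt]
          _ ≤ G i j + G j i := le_add_of_nonneg_left (hG0 i j)
  -- sum of G bounds
  have hGsum : ∑ i ∈ Finset.Icc 1 r, ∑ j ∈ Finset.Icc 1 r, G i j ≤ 8 * 4 ^ (α + 1) := by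
    rw [Finset.sum_comm]
    have hinner : ∀ j, ∑ i ∈ Finset.Icc 1 r, G i j ≤ 4 ^ (α + 1) * 2 * M j := by
      intro j
      have h1 : ∑ i ∈ Finset.Icc 1 r, G i j
          = ∑ i ∈ (Finset.Icc 1 r).filter (fun i => i < j),
              (4:ℝ) ^ (α + 1) * ((2:ℝ)⁻¹) ^ (j - i) * M j := by
        simp only [hG]
        exact (Finset.sum_filter _ _).symm
      rw [h1]
      have h2 : ∑ i ∈ (Finset.Icc 1 r).filter (fun i => i < j),
            (4:ℝ) ^ (α + 1) * ((2:ℝ)⁻¹) ^ (j - i) * M j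
          = ((4:ℝ) ^ (α + 1) * M j) *
            ∑ i ∈ (Finset.Icc 1 r).filter (fun i => i < j), ((2:ℝ)⁻¹) ^ (j - i) := by
        rw [Finset.mul_sum]
        apply Finset.sum_congr rfl
        intros
        ring
      rw [h2]
      have h3 : ∑ i ∈ (Finset.Icc 1 r).filter (fun i => i < j), ((2:ℝ)⁻¹) ^ (j - i) ≤ 2 := by
        apply sum_pow_le_two _ (by norm_num) (by norm_num) _ (fun i => j - i)
        intro a ha b hb hab
        have ha' := (Finset.mem_filter.mp ha).2
        have hb' := (Finset.mem_filter.mp hb).2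
        omega
      calc ((4:ℝ) ^ (α + 1) * M j) *
            ∑ i ∈ (Finset.Icc 1 r).filter (fun i => i < j), ((2:ℝ)⁻¹) ^ (j - i)
          ≤ ((4:ℝ) ^ (α + 1) * M j) * 2 :=
            mul_le_mul_of_nonneg_left h3 (mul_nonneg (by positivity) (hM0 j))
        _ = 4 ^ (α + 1) * 2 * M j := by ring
    calc ∑ j ∈ Finset.Icc 1 r, ∑ i ∈ Finset.Icc 1 r, G i j
        ≤ ∑ j ∈ Finset.Icc 1 r, 4 ^ (α + 1) * 2 * M j :=
          Finset.sum_le_sum (fun j _ => hinner j)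
      _ = 4 ^ (α + 1) * 2 * ∑ j ∈ Finset.Icc 1 r, M j := by rw [Finset.mul_sum]
      _ ≤ 4 ^ (α + 1) * 2 * 4 := mul_le_mul_of_nonneg_left hMsum (by positivity)
      _ = 8 * 4 ^ (α + 1) := by ring
  have hGsum' : ∑ i ∈ Finset.Icc 1 r, ∑ j ∈ Finset.Icc 1 r, G j i ≤ 8 * 4 ^ (α + 1) := by
    rw [Finset.sum_comm]
    exact hGsum
  -- reduce the vector norm
  rw [hu t x]
  simp only [ite_smul_zero, ← Finset.sum_smul, smul_smul]
  have hgen : ∀ y : ℝ, Real.sqrt (∑ p, (y • (![0,1,0] : Fin 3 → ℝ)) p ^ 2) = |y| := by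
    intro y
    have h : (∑ p, (y • (![0,1,0] : Fin 3 → ℝ)) p ^ 2) = y ^ 2 := by
      simp [Fin.sum_univ_three]
    rw [h, Real.sqrt_sq_eq_abs]
  rw [hgen, abs_mul, abs_of_nonneg (show (0:ℝ) ≤ (r:ℝ) ^ (-(2 * β)) / 2 by positivity)]
  have hSabs : |∑ i ∈ Finset.Icc 1 r, ∑ j ∈ Finset.Icc 1 r,
      if i ≠ j then
        ((kmag i ^ α * kmag j ^ α *
            ∫ τ in (0:ℝ)..t,
              Real.exp (-(kmag i ^ (2 * α) + (kmag j ^ 2 + 1) ^ α) * τ) *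
                Real.exp (-(Real.sqrt (∑ m, (k' j m - k i m) ^ 2)) ^ (2 * α) * (t - τ))) *
          Real.sin (∑ m, (k' j m - k i m) * x m))
      else 0| ≤ 16 * 4 ^ (α + 1) := by
    refine le_trans (Finset.abs_sum_le_sum_abs _ _) ?_
    refine le_trans (Finset.sum_le_sum (fun i _ => Finset.abs_sum_le_sum_abs _ _)) ?_
    refine le_trans (Finset.sum_le_sum
      (fun i hi => Finset.sum_le_sum (fun j hj => key i hi j hj))) ?_
    simp only [Finset.sum_add_distrib]
    linarith
  calc (r:ℝ) ^ (-(2 * β)) / 2 * |∑ i ∈ Finset.Icc 1 r, ∑ j ∈ Finset.Icc 1 r,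
        if i ≠ j then
          ((kmag i ^ α * kmag j ^ α *
              ∫ τ in (0:ℝ)..t,
                Real.exp (-(kmag i ^ (2 * α) + (kmag j ^ 2 + 1) ^ α) * τ) *
                  Real.exp (-(Real.sqrt (∑ m, (k' j m - k i m) ^ 2)) ^ (2 * α) * (t - τ))) *
            Real.sin (∑ m, (k' j m - k i m) * x m))
        else 0|
      ≤ (r:ℝ) ^ (-(2 * β)) / 2 * (16 * 4 ^ (α + 1)) :=
        mul_le_mul_of_nonneg_left hSabs (by positivity)
    _ = 8 * 4 ^ (α + 1) * (r:ℝ) ^ (-(2 * β)) := by ring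
end

section
/- With the wave-vector setup in the context, define for t > 0 and x ∈ ℝ³: u₁₂(t,x) = (r^{−2β}/2) Σ_{i=1}^r Σ_{j=1}^r |k_i|^α |k_j|^α ( ∫_0^t e^{−(|k_i|^{2α}+|k_j'|^{2α})τ} e^{−|k_j'+k_i|^{2α}(t−τ)} dτ ) sin((k_j'+k_i)·x) v'. Then there exists a constant C depending only on α (independent of r, K, t, β) such that sup_{x∈ℝ³} |u₁₂(t,x)| ≤ C r^{−2β} for all t > 0. -/
open Real Finset

lemma geo_aux (ρ : ℝ) (hρ : Real.sqrt 2 ≤ ρ) (n : ℕ) :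
    ∀ c : ℝ, 0 < c →
      (c ≤ 1 → (∑ i ∈ Finset.range n, min (ρ ^ i * c) (ρ ^ i * c)⁻¹) ≤ 8 - 3 * c) ∧
      (1 ≤ c → (∑ i ∈ Finset.range n, min (ρ ^ i * c) (ρ ^ i * c)⁻¹) ≤ 4 / c) := by
  have h2 : (1.4 : ℝ) ≤ Real.sqrt 2 := by
    nlinarith [Real.sq_sqrt (by norm_num : (0:ℝ) ≤ 2), Real.sqrt_nonneg 2]
  have hρ2 : (1.4 : ℝ) ≤ ρ := le_trans h2 hρ
  induction n with
  | zero =>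
    intro c hc
    constructor <;> intro h <;> simp <;> [linarith; positivity]
  | succ n ih =>
    intro c hc
    have hrw : ∑ i ∈ Finset.range (n+1), min (ρ ^ i * c) (ρ ^ i * c)⁻¹
        = (∑ i ∈ Finset.range n, min (ρ ^ i * (ρ * c)) (ρ ^ i * (ρ * c))⁻¹)
          + min c c⁻¹ := by
      rw [Finset.sum_range_succ']
      simp only [pow_zero, one_mul]
      congr 1
      refine Finset.sum_congr rfl fun i _ => ?_
      have h : ρ ^ (i + 1) * c = ρ ^ i * (ρ * c) := by ring
      rw [h]
    have hrc : 0 < ρ * c := by nlinarith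
    have ihρ := ih (ρ * c) hrc
    constructor
    · intro hc1
      have hmin : min c c⁻¹ = c := by
        apply min_eq_left
        have hi := mul_inv_cancel₀ (ne_of_gt hc)
        nlinarith [inv_pos.mpr hc]
      rw [hrw, hmin]
      rcases le_or_gt (ρ * c) 1 with h1 | h1
      · have := ihρ.1 h1
        nlinarith
      · have := ihρ.2 h1.le
        have h4 : 4 / (ρ * c) ≤ 4 := by
          rw [div_le_iff₀ hrc]; nlinarith
        nlinarith
    · intro hc1
      have hmin : min c c⁻¹ = c⁻¹ := by
        apply min_eq_right
        have hi := mul_inv_cancel₀ (ne_of_gt hc)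
        nlinarith [inv_pos.mpr hc]
      rw [hrw, hmin]
      have hIH := ihρ.2 (by nlinarith)
      have h4 : 4 / (ρ * c) ≤ (4 / 1.4) / c := by
        rw [div_le_div_iff₀ hrc (by positivity)]
        nlinarith
      have h5 : c⁻¹ = 1 / c := (one_div c).symm
      have h6 : (∑ i ∈ Finset.range n, min (ρ ^ i * (ρ * c)) (ρ ^ i * (ρ * c))⁻¹)
          ≤ (4/1.4) / c := le_trans hIH h4
      rw [h5]
      have h7 : (4:ℝ)/1.4 / c + 1 / c ≤ 4 / c := by
        rw [← add_div, div_le_div_iff₀ hc hc]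
        nlinarith
      linarith

lemma int_nonneg (a b t : ℝ) (ht : 0 ≤ t) :
    0 ≤ ∫ τ in (0:ℝ)..t, Real.exp (-a * τ) * Real.exp (-b * (t - τ)) :=
  intervalIntegral.integral_nonneg ht (fun τ _ => by positivity)

lemma int_bound1 (a b M t : ℝ) (ht : 0 < t) (hM : 0 < M) (ha : M ≤ a) (hb : M ≤ b) :
    (∫ τ in (0:ℝ)..t, Real.exp (-a * τ) * Real.exp (-b * (t - τ)))
      ≤ Real.exp (-(M * t)) * t := by
  have h := intervalIntegral.norm_integral_le_of_norm_le_const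
    (a := 0) (b := t) (C := Real.exp (-(M * t)))
    (f := fun τ => Real.exp (-a * τ) * Real.exp (-b * (t - τ))) ?_
  · calc (∫ τ in (0:ℝ)..t, Real.exp (-a * τ) * Real.exp (-b * (t - τ)))
        ≤ ‖∫ τ in (0:ℝ)..t, Real.exp (-a * τ) * Real.exp (-b * (t - τ))‖ :=
          le_abs_self _
      _ ≤ Real.exp (-(M * t)) * |t - 0| := h
      _ = Real.exp (-(M * t)) * t := by rw [sub_zero, abs_of_pos ht]
  · intro τ hτ
    rw [Set.uIoc_of_le ht.le] at hτ
    obtain ⟨hτ0, hτt⟩ := hτ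
    rw [Real.norm_eq_abs, abs_of_pos (by positivity), ← Real.exp_add]
    apply Real.exp_le_exp.mpr
    nlinarith

lemma int_bound2 (a b M t : ℝ) (ht : 0 < t) (hM : 0 < M) (ha : M ≤ a) (hb : M ≤ b) :
    (∫ τ in (0:ℝ)..t, Real.exp (-a * τ) * Real.exp (-b * (t - τ))) ≤ 1 / M := by
  have hcont1 : Continuous fun τ : ℝ => Real.exp (-a * τ) * Real.exp (-b * (t - τ)) := by
    continuity
  have hcont2 : Continuous fun τ : ℝ => Real.exp (-M * τ) := by continuity
  have hmono : (∫ τ in (0:ℝ)..t, Real.exp (-a * τ) * Real.exp (-b * (t - τ)))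
      ≤ ∫ τ in (0:ℝ)..t, Real.exp (-M * τ) := by
    apply intervalIntegral.integral_mono_on ht.le
      (hcont1.intervalIntegrable 0 t) (hcont2.intervalIntegrable 0 t)
    intro τ hτ
    obtain ⟨hτ0, hτt⟩ := hτ
    calc Real.exp (-a * τ) * Real.exp (-b * (t - τ))
        ≤ Real.exp (-M * τ) * 1 := by
          apply mul_le_mul
          · apply Real.exp_le_exp.mpr; nlinarith
          · exact Real.exp_le_one_iff.mpr (by nlinarith)
          · positivity
          · positivity
      _ = Real.exp (-M * τ) := mul_one _
  have hint : (∫ τ in (0:ℝ)..t, Real.exp (-M * τ)) = (-M)⁻¹ * (Real.exp (-M * t) - Real.exp (-M * 0)) := by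
    rw [intervalIntegral.integral_comp_mul_left (fun x => Real.exp x) (by linarith : -M ≠ 0)]
    rw [integral_exp]
    simp [smul_eq_mul]
  have hfin : (-M)⁻¹ * (Real.exp (-M * t) - Real.exp (-M * 0)) ≤ 1 / M := by
    rw [mul_zero, Real.exp_zero]
    have h1 : 0 < Real.exp (-M * t) := Real.exp_pos _
    have h2 : Real.exp (-M * t) ≤ 1 := Real.exp_le_one_iff.mpr (by nlinarith)
    rw [div_eq_mul_inv, one_mul]
    have : (-M)⁻¹ = -(M⁻¹) := by field_simp
    rw [this]
    have hMi : 0 < M⁻¹ := inv_pos.mpr hM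
    nlinarith
  linarith

noncomputable def phiNS (x t : ℝ) : ℝ :=
  Real.sqrt (x * Real.sqrt t) * Real.exp (-(x ^ 2 * t) / 4)

lemma phiNS_nonneg (x t : ℝ) : 0 ≤ phiNS x t := by
  unfold phiNS; positivity

lemma phiNS_sq (x t : ℝ) (hx : 0 ≤ x) (ht : 0 ≤ t) :
    phiNS x t ^ 2 = x * Real.sqrt t * Real.exp (-(x ^ 2 * t) / 2) := by
  unfold phiNS
  have h1 : Real.exp (-(x ^ 2 * t) / 4) ^ 2 = Real.exp (-(x ^ 2 * t) / 2) := by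
    rw [sq, ← Real.exp_add]; congr 1; ring
  rw [mul_pow, Real.sq_sqrt (by positivity : (0:ℝ) ≤ x * Real.sqrt t), h1]

lemma term_bound (x₁ x₂ t I : ℝ) (ht : 0 < t) (hx₁ : 1 ≤ x₁) (hx₂ : 1 ≤ x₂)
    (hI0 : 0 ≤ I) (hI1 : I ≤ Real.exp (-(max x₁ x₂ ^ 2 * t)) * t)
    (hI2 : I ≤ 1 / max x₁ x₂ ^ 2) :
    x₁ * x₂ * I ≤ Real.sqrt 2 * (phiNS x₁ t * phiNS x₂ t) := by
  have hx₁0 : (0:ℝ) < x₁ := by linarith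
  have hx₂0 : (0:ℝ) < x₂ := by linarith
  set M : ℝ := max x₁ x₂ ^ 2 with hM
  have hM1 : x₁ * x₂ ≤ M := by
    rcases max_cases x₁ x₂ with ⟨h1, h2⟩ | ⟨h1, h2⟩ <;> rw [hM, h1] <;> nlinarith
  have hM0 : 0 < M := by nlinarith
  have hM2 : (x₁ ^ 2 + x₂ ^ 2) / 2 ≤ M := by
    rcases max_cases x₁ x₂ with ⟨h1, h2⟩ | ⟨h1, h2⟩ <;> rw [hM, h1] <;> nlinarith
  set E : ℝ := Real.exp (-(x₁ ^ 2 * t) / 2) * Real.exp (-(x₂ ^ 2 * t) / 2) with hE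
  have hE0 : 0 < E := by rw [hE]; positivity
  have he : Real.exp (-(M * t)) ≤ E := by
    rw [hE, ← Real.exp_add]
    apply Real.exp_le_exp.mpr
    nlinarith [mul_le_mul_of_nonneg_right hM2 ht.le]
  have hsq : (x₁ * x₂ * I) ^ 2 ≤ (Real.sqrt 2 * (phiNS x₁ t * phiNS x₂ t)) ^ 2 := by
    have hr : (Real.sqrt 2 * (phiNS x₁ t * phiNS x₂ t)) ^ 2
        = 2 * (x₁ * x₂ * (Real.sqrt t * Real.sqrt t) * E) := by
      rw [mul_pow, mul_pow, Real.sq_sqrt (by norm_num : (0:ℝ) ≤ 2),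
        phiNS_sq x₁ t hx₁0.le ht.le, phiNS_sq x₂ t hx₂0.le ht.le, hE]
      ring
    rw [hr, Real.mul_self_sqrt ht.le]
    have hIle : I ^ 2 ≤ (Real.exp (-(M * t)) * t) * (1 / M) := by
      rw [sq]
      apply mul_le_mul hI1 hI2 hI0 (by positivity)
    have hxx : (x₁ * x₂) ^ 2 * (1 / M) ≤ x₁ * x₂ := by
      rw [mul_one_div, div_le_iff₀ hM0]
      nlinarith [mul_pos hx₁0 hx₂0]
    have key : (x₁ * x₂) ^ 2 * ((Real.exp (-(M * t)) * t) * (1 / M))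
        ≤ 2 * (x₁ * x₂ * t * E) := by
      calc (x₁ * x₂) ^ 2 * ((Real.exp (-(M * t)) * t) * (1 / M))
          = ((x₁ * x₂) ^ 2 * (1 / M)) * (t * Real.exp (-(M * t))) := by ring
        _ ≤ (x₁ * x₂) * (t * E) := by
            apply mul_le_mul hxx (mul_le_mul_of_nonneg_left he ht.le) (by positivity)
              (by positivity)
        _ ≤ 2 * (x₁ * x₂ * t * E) := by
            nlinarith [mul_pos (mul_pos (mul_pos hx₁0 hx₂0) ht) hE0]
    calc (x₁ * x₂ * I) ^ 2 = (x₁ * x₂) ^ 2 * I ^ 2 := by ring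
      _ ≤ (x₁ * x₂) ^ 2 * ((Real.exp (-(M * t)) * t) * (1 / M)) := by
          apply mul_le_mul_of_nonneg_left hIle (by positivity)
      _ ≤ 2 * (x₁ * x₂ * t * E) := key
  have hrhs : 0 ≤ Real.sqrt 2 * (phiNS x₁ t * phiNS x₂ t) := by
    have := phiNS_nonneg x₁ t; have := phiNS_nonneg x₂ t; positivity
  exact le_of_pow_le_pow_left₀ two_ne_zero hrhs hsq

lemma wexp_le (w : ℝ) (hw : 0 < w) :
    w * Real.exp (-(w ^ 2) / 2) ≤ 2 * w⁻¹ := by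
  have h1 : w ^ 2 / 2 + 1 ≤ Real.exp (w ^ 2 / 2) := Real.add_one_le_exp _
  have h2 : Real.exp (w ^ 2 / 2) * Real.exp (-(w ^ 2) / 2) = 1 := by
    rw [← Real.exp_add, show w ^ 2 / 2 + -(w ^ 2) / 2 = 0 by ring, Real.exp_zero]
  have h3 : 0 < Real.exp (-(w ^ 2) / 2) := Real.exp_pos _
  have h5 : w ^ 2 * Real.exp (-(w ^ 2) / 2) ≤ 2 := by nlinarith
  have h4 : w ^ 2 * w⁻¹ = w := by field_simp [hw.ne']
  calc w * Real.exp (-(w ^ 2) / 2)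
      = (w ^ 2 * Real.exp (-(w ^ 2) / 2)) * w⁻¹ := by
        rw [show w ^ 2 * Real.exp (-(w ^ 2) / 2) * w⁻¹
            = (w ^ 2 * w⁻¹) * Real.exp (-(w ^ 2) / 2) by ring, h4]
    _ ≤ 2 * w⁻¹ := mul_le_mul_of_nonneg_right h5 (inv_pos.mpr hw).le

lemma phiNS_le_min (x t : ℝ) (hx : 0 < x) (ht : 0 < t) :
    phiNS x t ≤ Real.sqrt 2 *
      min (Real.sqrt (x * Real.sqrt t)) (Real.sqrt (x * Real.sqrt t))⁻¹ := by
  have hw0 : 0 < x * Real.sqrt t := by positivity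
  have hv0 : 0 < Real.sqrt (x * Real.sqrt t) := Real.sqrt_pos.mpr hw0
  have hs2 : (1:ℝ) ≤ Real.sqrt 2 := by
    rw [show (1:ℝ) = Real.sqrt 1 by simp]
    exact Real.sqrt_le_sqrt (by norm_num)
  have h1 : phiNS x t ≤ Real.sqrt (x * Real.sqrt t) := by
    unfold phiNS
    nth_rewrite 2 [← mul_one (Real.sqrt (x * Real.sqrt t))]
    apply mul_le_mul_of_nonneg_left _ hv0.le
    apply Real.exp_le_one_iff.mpr
    have : (0:ℝ) ≤ x ^ 2 * t := by positivity
    linarith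
  have h2 : phiNS x t ≤ Real.sqrt 2 * (Real.sqrt (x * Real.sqrt t))⁻¹ := by
    have hsq : phiNS x t ^ 2 ≤ (Real.sqrt 2 * (Real.sqrt (x * Real.sqrt t))⁻¹) ^ 2 := by
      rw [phiNS_sq x t hx.le ht.le, mul_pow, Real.sq_sqrt (by norm_num : (0:ℝ) ≤ 2),
        inv_pow, Real.sq_sqrt hw0.le]
      have harg : -(x ^ 2 * t) / 2 = -((x * Real.sqrt t) ^ 2) / 2 := by
        rw [mul_pow, Real.sq_sqrt ht.le]
      rw [harg]
      exact wexp_le (x * Real.sqrt t) hw0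
    have hrhs : 0 ≤ Real.sqrt 2 * (Real.sqrt (x * Real.sqrt t))⁻¹ := by positivity
    exact le_of_pow_le_pow_left₀ two_ne_zero hrhs hsq
  rcases le_total (Real.sqrt (x * Real.sqrt t)) (Real.sqrt (x * Real.sqrt t))⁻¹ with h | h
  · rw [min_eq_left h]
    calc phiNS x t ≤ Real.sqrt (x * Real.sqrt t) := h1
      _ ≤ Real.sqrt 2 * Real.sqrt (x * Real.sqrt t) := by nlinarith
  · rw [min_eq_right h]; exact h2

lemma sqrt_pow' (a : ℝ) (ha : 0 ≤ a) (k : ℕ) :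
    Real.sqrt (a ^ k) = Real.sqrt a ^ k := by
  induction k with
  | zero => simp
  | succ k ih => rw [pow_succ, pow_succ, Real.sqrt_mul (by positivity), ih]

lemma phi_sum_bound (α : ℝ) (hα : 1 ≤ α) (K t : ℝ) (hK : 1 ≤ K) (ht : 0 < t) (r : ℕ) :
    ∑ i ∈ Finset.Icc 1 r, phiNS (((2:ℝ) ^ (i - 1) * K) ^ α) t ≤ 8 * Real.sqrt 2 := by
  have h2α : (2:ℝ) ≤ (2:ℝ) ^ α := by
    calc (2:ℝ) = (2:ℝ) ^ (1:ℝ) := (Real.rpow_one 2).symm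
      _ ≤ (2:ℝ) ^ α := Real.rpow_le_rpow_of_exponent_le (by norm_num) hα
  have h2α0 : (0:ℝ) < (2:ℝ) ^ α := Real.rpow_pos_of_pos (by norm_num) α
  set ρ : ℝ := Real.sqrt ((2:ℝ) ^ α) with hρdef
  have hρ : Real.sqrt 2 ≤ ρ := Real.sqrt_le_sqrt h2α
  set c : ℝ := Real.sqrt (K ^ α * Real.sqrt t) with hcdef
  have hKα : (0:ℝ) < K ^ α := Real.rpow_pos_of_pos (by linarith) α
  have hc : 0 < c := Real.sqrt_pos.mpr (by positivity)
  have hmain : ∀ k : ℕ, phiNS (((2:ℝ) ^ k * K) ^ α) t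
      ≤ Real.sqrt 2 * min (ρ ^ k * c) (ρ ^ k * c)⁻¹ := by
    intro k
    have h2k : (0:ℝ) < (2:ℝ) ^ k := by positivity
    have hx : (0:ℝ) < ((2:ℝ) ^ k * K) ^ α :=
      Real.rpow_pos_of_pos (by positivity) α
    have hv : Real.sqrt (((2:ℝ) ^ k * K) ^ α * Real.sqrt t) = ρ ^ k * c := by
      have e1 : ((2:ℝ) ^ k * K) ^ α = ((2:ℝ) ^ α) ^ k * K ^ α := by
        rw [Real.mul_rpow h2k.le (by linarith : (0:ℝ) ≤ K)]
        congr 1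
        rw [← Real.rpow_natCast (2:ℝ) k, ← Real.rpow_mul (by norm_num : (0:ℝ) ≤ 2),
          mul_comm, Real.rpow_mul (by norm_num : (0:ℝ) ≤ 2), Real.rpow_natCast]
      rw [e1, mul_assoc, Real.sqrt_mul (by positivity), sqrt_pow' _ h2α0.le, hcdef]
    rw [← hv]
    exact phiNS_le_min _ t hx ht
  have hsum8 : (∑ i ∈ Finset.range r, min (ρ ^ i * c) (ρ ^ i * c)⁻¹) ≤ 8 := by
    rcases le_total c 1 with h | h
    · have := (geo_aux ρ hρ r c hc).1 h
      linarith
    · have h4 := (geo_aux ρ hρ r c hc).2 h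
      have : (4:ℝ) / c ≤ 4 := by
        rw [div_le_iff₀ hc]; nlinarith
      linarith
  calc ∑ i ∈ Finset.Icc 1 r, phiNS (((2:ℝ) ^ (i - 1) * K) ^ α) t
      = ∑ k ∈ Finset.range r, phiNS (((2:ℝ) ^ ((1 + k) - 1) * K) ^ α) t := by
        rw [← Finset.Ico_add_one_right_eq_Icc, Finset.sum_Ico_eq_sum_range]
        norm_num
    _ = ∑ k ∈ Finset.range r, phiNS (((2:ℝ) ^ k * K) ^ α) t := by
        apply Finset.sum_congr rfl
        intro k _
        have h : 1 + k - 1 = k := by omega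
        rw [h]
    _ ≤ ∑ k ∈ Finset.range r, Real.sqrt 2 * min (ρ ^ k * c) (ρ ^ k * c)⁻¹ :=
        Finset.sum_le_sum fun k _ => hmain k
    _ = Real.sqrt 2 * ∑ k ∈ Finset.range r, min (ρ ^ k * c) (ρ ^ k * c)⁻¹ := by
        rw [Finset.mul_sum]
    _ ≤ Real.sqrt 2 * 8 := by
        apply mul_le_mul_of_nonneg_left hsum8 (Real.sqrt_nonneg 2)
    _ = 8 * Real.sqrt 2 := by ring

lemma norm_eval (c : ℝ) (s : Finset ℕ) (g : ℕ → ℕ → ℝ) :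
    Real.sqrt (∑ p, ((c • ∑ i ∈ s, ∑ j ∈ s, g i j • (![0,1,0] : Fin 3 → ℝ)) p) ^ 2)
      = |c * ∑ i ∈ s, ∑ j ∈ s, g i j| := by
  have hcomp : ∀ p : Fin 3, (c • ∑ i ∈ s, ∑ j ∈ s, g i j • (![0,1,0] : Fin 3 → ℝ)) p
      = (c * ∑ i ∈ s, ∑ j ∈ s, g i j) * (![0,1,0] : Fin 3 → ℝ) p := by
    intro p
    rw [Pi.smul_apply, smul_eq_mul, Finset.sum_apply]
    have hin : ∀ i : ℕ, (∑ j ∈ s, g i j • (![0,1,0] : Fin 3 → ℝ)) p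
        = (∑ j ∈ s, g i j) * (![0,1,0] : Fin 3 → ℝ) p := by
      intro i
      rw [Finset.sum_apply, Finset.sum_mul]
      apply Finset.sum_congr rfl
      intro j _
      rw [Pi.smul_apply, smul_eq_mul]
    rw [Finset.sum_congr rfl fun i _ => hin i, ← Finset.sum_mul, mul_assoc]
  rw [Fin.sum_univ_three, hcomp 0, hcomp 1, hcomp 2]
  simp only [Matrix.cons_val_zero, Matrix.cons_val_one, Matrix.head_cons, mul_zero, mul_one]
  have h2 : ((![0,1,0] : Fin 3 → ℝ)) 2 = 0 := by simp
  rw [h2, mul_zero]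
  norm_num
  rw [Real.sqrt_sq_eq_abs, abs_mul]

/-- The sum-frequency part `u₁₂` of the second Picard iterate satisfies the uniform
bound `sup_x |u₁₂(t,x)| ≤ C r^{-2β}` for all `t > 0`, with `C` depending only on `α`. -/
theorem stmt_10 (α : ℝ) (hα : 1 ≤ α) :
    ∃ C : ℝ, 0 < C ∧
      ∀ r : ℕ, 1 ≤ r → ∀ K β : ℝ, 1 ≤ K → 0 < β →
      ∀ kmag : ℕ → ℝ, (∀ i, kmag i = (2:ℝ) ^ (i - 1) * K) →
      ∀ k k' : ℕ → Fin 3 → ℝ,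
        (∀ i, k i = ![kmag i, 0, 0]) → (∀ i, k' i = ![kmag i, 0, 1]) →
      ∀ u₁₂ : ℝ → (Fin 3 → ℝ) → Fin 3 → ℝ,
        (∀ t x, u₁₂ t x = ((r:ℝ) ^ (-(2 * β)) / 2) •
          ∑ i ∈ Finset.Icc 1 r, ∑ j ∈ Finset.Icc 1 r,
            ((kmag i ^ α * kmag j ^ α *
                ∫ τ in (0:ℝ)..t,
                  Real.exp (-(kmag i ^ (2 * α) + (kmag j ^ 2 + 1) ^ α) * τ) *
                    Real.exp (-(Real.sqrt (∑ m, (k' j m + k i m) ^ 2)) ^ (2 * α) *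
                      (t - τ))) *
              Real.sin (∑ m, (k' j m + k i m) * x m)) • (![0, 1, 0] : Fin 3 → ℝ)) →
        ∀ t : ℝ, 0 < t → ∀ x : Fin 3 → ℝ,
          Real.sqrt (∑ p, u₁₂ t x p ^ 2) ≤ C * (r:ℝ) ^ (-(2 * β)) := by
  have hα0 : (0:ℝ) ≤ α := by linarith
  refine ⟨256, by norm_num, ?_⟩
  intro r hr K β hK hβ kmag hkmag k k' hk hk' u₁₂ hu t ht x
  have hr0 : (0:ℝ) < (r:ℝ) := by exact_mod_cast Nat.lt_of_lt_of_le Nat.zero_lt_one hr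
  have hP0 : (0:ℝ) < (r:ℝ) ^ (-(2 * β)) := Real.rpow_pos_of_pos hr0 _
  set P : ℝ := (r:ℝ) ^ (-(2 * β)) with hPdef
  set F : ℕ → ℕ → ℝ := fun i j =>
    (kmag i ^ α * kmag j ^ α *
      ∫ τ in (0:ℝ)..t,
        Real.exp (-(kmag i ^ (2 * α) + (kmag j ^ 2 + 1) ^ α) * τ) *
          Real.exp (-(Real.sqrt (∑ m, (k' j m + k i m) ^ 2)) ^ (2 * α) * (t - τ)))
      * Real.sin (∑ m, (k' j m + k i m) * x m) with hF
  -- basic facts about kmag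
  have hkm1 : ∀ i : ℕ, (1:ℝ) ≤ kmag i := by
    intro i
    rw [hkmag i]
    have h1 : (1:ℝ) ≤ (2:ℝ) ^ (i - 1) := one_le_pow₀ (by norm_num)
    nlinarith
  have hx1 : ∀ i : ℕ, (1:ℝ) ≤ kmag i ^ α := fun i => Real.one_le_rpow (hkm1 i) hα0
  have hx0 : ∀ i : ℕ, (0:ℝ) < kmag i ^ α := fun i => by linarith [hx1 i]
  -- rewriting powers
  have hsq : ∀ i : ℕ, kmag i ^ (2 * α) = (kmag i ^ α) ^ 2 := by
    intro i
    rw [← Real.rpow_natCast (kmag i ^ α) 2, ← Real.rpow_mul (by linarith [hkm1 i] : (0:ℝ) ≤ kmag i)]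
    norm_num [mul_comm]
  -- the wave vector sum
  have hEsum : ∀ i j : ℕ, (∑ m, (k' j m + k i m) ^ 2) = (kmag j + kmag i) ^ 2 + 1 := by
    intro i j
    rw [hk i, hk' j, Fin.sum_univ_three]
    simp [Matrix.cons_val_zero, Matrix.cons_val_one, Matrix.head_cons]
  -- the per-term bound
  have hFb : ∀ i j : ℕ, |F i j| ≤
      Real.sqrt 2 * (phiNS (kmag i ^ α) t * phiNS (kmag j ^ α) t) := by
    intro i j
    have hki := hkm1 i; have hkj := hkm1 j
    set x₁ : ℝ := kmag i ^ α
    set x₂ : ℝ := kmag j ^ α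
    set M : ℝ := max x₁ x₂ ^ 2 with hMdef
    have hM0 : 0 < M := by
      have := hx0 i; have := hx0 j
      rcases max_cases x₁ x₂ with ⟨h1, _⟩ | ⟨h1, _⟩ <;> rw [hMdef, h1] <;> positivity
    set a : ℝ := kmag i ^ (2 * α) + (kmag j ^ 2 + 1) ^ α with hadef
    set b : ℝ := (Real.sqrt (∑ m, (k' j m + k i m) ^ 2)) ^ (2 * α) with hbdef
    have haM : M ≤ a := by
      have h1 : kmag i ^ (2 * α) = x₁ ^ 2 := hsq i
      have h2 : x₂ ^ 2 ≤ (kmag j ^ 2 + 1) ^ α := by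
        rw [← hsq j]
        have : kmag j ^ (2 * α) = (kmag j ^ (2:ℕ)) ^ α := by
          rw [← Real.rpow_natCast (kmag j) 2, ← Real.rpow_mul (by linarith : (0:ℝ) ≤ kmag j)]
          norm_num
        rw [this]
        apply Real.rpow_le_rpow (by positivity) (by norm_num) hα0
      have h3 : (0:ℝ) ≤ kmag i ^ (2 * α) := by rw [h1]; positivity
      have h4 : (0:ℝ) ≤ x₂ ^ 2 := by positivity
      rcases max_cases x₁ x₂ with ⟨hm, _⟩ | ⟨hm, _⟩ <;> rw [hMdef, hm, hadef] <;>
        [skip; skip] <;> nlinarith [h1, h2]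
    have hbM : M ≤ b := by
      have hbase : ∀ z : ℝ, 1 ≤ z → z ≤ Real.sqrt (∑ m, (k' j m + k i m) ^ 2) →
          z ^ α ≤ Real.sqrt (∑ m, (k' j m + k i m) ^ 2) ^ (α) := fun z hz h =>
        Real.rpow_le_rpow (by linarith) h hα0
      have hsqrt_i : kmag i ≤ Real.sqrt (∑ m, (k' j m + k i m) ^ 2) := by
        rw [hEsum i j, Real.le_sqrt (by linarith) (by positivity)]
        nlinarith
      have hsqrt_j : kmag j ≤ Real.sqrt (∑ m, (k' j m + k i m) ^ 2) := by
        rw [hEsum i j, Real.le_sqrt (by linarith) (by positivity)]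
        nlinarith
      have hb1 : x₁ ^ 2 ≤ b := by
        rw [hbdef, ← hsq i]
        calc kmag i ^ (2 * α) ≤ Real.sqrt (∑ m, (k' j m + k i m) ^ 2) ^ (2 * α) :=
            Real.rpow_le_rpow (by linarith) hsqrt_i (by linarith)
          _ = _ := rfl
        -- need rewrite x₁^2 = kmag i ^(2α): done by ← hsq
      have hb2 : x₂ ^ 2 ≤ b := by
        rw [hbdef, ← hsq j]
        exact Real.rpow_le_rpow (by linarith) hsqrt_j (by linarith)
      rcases max_cases x₁ x₂ with ⟨hm, _⟩ | ⟨hm, _⟩ <;> rw [hMdef, hm]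
      · exact hb1
      · exact hb2
    set I : ℝ := ∫ τ in (0:ℝ)..t,
        Real.exp (-a * τ) * Real.exp (-b * (t - τ)) with hIdef
    have hI0 : 0 ≤ I := int_nonneg a b t ht.le
    have hI1 : I ≤ Real.exp (-(M * t)) * t := int_bound1 a b M t ht hM0 haM hbM
    have hI2 : I ≤ 1 / M := int_bound2 a b M t ht hM0 haM hbM
    have hterm : x₁ * x₂ * I ≤ Real.sqrt 2 * (phiNS x₁ t * phiNS x₂ t) :=
      term_bound x₁ x₂ t I ht (hx1 i) (hx1 j) hI0 hI1 hI2
    have habs : |F i j| ≤ x₁ * x₂ * I := by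
      rw [hF]
      dsimp only
      rw [abs_mul]
      have hs : |Real.sin (∑ m, (k' j m + k i m) * x m)| ≤ 1 := Real.abs_sin_le_one _
      have hval : |x₁ * x₂ * I| = x₁ * x₂ * I := by
        apply abs_of_nonneg
        have := hx0 i; have := hx0 j
        positivity
      calc |x₁ * x₂ * I| * |Real.sin (∑ m, (k' j m + k i m) * x m)|
          ≤ |x₁ * x₂ * I| * 1 := by
            apply mul_le_mul_of_nonneg_left hs (abs_nonneg _)
        _ = x₁ * x₂ * I := by rw [mul_one, hval]
    linarith
  -- evaluate the norm
  rw [hu t x]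
  refine le_trans (le_of_eq (norm_eval (P / 2) (Finset.Icc 1 r) F)) ?_
  set S : ℝ := ∑ i ∈ Finset.Icc 1 r, ∑ j ∈ Finset.Icc 1 r, F i j with hSdef
  -- bound |S|
  have hphi : ∑ i ∈ Finset.Icc 1 r, phiNS (kmag i ^ α) t ≤ 8 * Real.sqrt 2 := by
    have := phi_sum_bound α hα K t hK ht r
    calc ∑ i ∈ Finset.Icc 1 r, phiNS (kmag i ^ α) t
        = ∑ i ∈ Finset.Icc 1 r, phiNS (((2:ℝ) ^ (i - 1) * K) ^ α) t := by
          apply Finset.sum_congr rfl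
          intro i _
          rw [hkmag i]
      _ ≤ 8 * Real.sqrt 2 := this
  have hphi0 : (0:ℝ) ≤ ∑ i ∈ Finset.Icc 1 r, phiNS (kmag i ^ α) t :=
    Finset.sum_nonneg fun i _ => phiNS_nonneg _ _
  have hS : |S| ≤ Real.sqrt 2 * 128 := by
    have h1 : |S| ≤ ∑ i ∈ Finset.Icc 1 r, ∑ j ∈ Finset.Icc 1 r,
        Real.sqrt 2 * (phiNS (kmag i ^ α) t * phiNS (kmag j ^ α) t) := by
      calc |S| ≤ ∑ i ∈ Finset.Icc 1 r, |∑ j ∈ Finset.Icc 1 r, F i j| :=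
          Finset.abs_sum_le_sum_abs _ _
        _ ≤ ∑ i ∈ Finset.Icc 1 r, ∑ j ∈ Finset.Icc 1 r, |F i j| :=
          Finset.sum_le_sum fun i _ => Finset.abs_sum_le_sum_abs _ _
        _ ≤ _ := Finset.sum_le_sum fun i _ => Finset.sum_le_sum fun j _ => hFb i j
    have h2 : ∑ i ∈ Finset.Icc 1 r, ∑ j ∈ Finset.Icc 1 r,
        Real.sqrt 2 * (phiNS (kmag i ^ α) t * phiNS (kmag j ^ α) t)
        = Real.sqrt 2 * ((∑ i ∈ Finset.Icc 1 r, phiNS (kmag i ^ α) t) *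
            (∑ j ∈ Finset.Icc 1 r, phiNS (kmag j ^ α) t)) := by
      rw [Finset.sum_mul_sum]
      rw [Finset.mul_sum]
      apply Finset.sum_congr rfl
      intro i _
      rw [Finset.mul_sum]
    have h3 : (∑ i ∈ Finset.Icc 1 r, phiNS (kmag i ^ α) t) *
        (∑ j ∈ Finset.Icc 1 r, phiNS (kmag j ^ α) t) ≤ (8 * Real.sqrt 2) * (8 * Real.sqrt 2) :=
      mul_le_mul hphi hphi hphi0 (by positivity)
    have h4 : (8 * Real.sqrt 2) * (8 * Real.sqrt 2) = 128 := by
      have := Real.mul_self_sqrt (by norm_num : (0:ℝ) ≤ 2)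
      nlinarith
    calc |S| ≤ Real.sqrt 2 * ((∑ i ∈ Finset.Icc 1 r, phiNS (kmag i ^ α) t) *
            (∑ j ∈ Finset.Icc 1 r, phiNS (kmag j ^ α) t)) := by rw [← h2]; exact h1
      _ ≤ Real.sqrt 2 * 128 := by
          rw [← h4]
          exact mul_le_mul_of_nonneg_left h3 (Real.sqrt_nonneg 2)
  have hsqrt2 : Real.sqrt 2 ≤ 2 := by
    nlinarith [Real.sq_sqrt (by norm_num : (0:ℝ) ≤ 2), Real.sqrt_nonneg 2]
  calc |P / 2 * S| = P / 2 * |S| := by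
        rw [abs_mul, abs_of_nonneg (by positivity : (0:ℝ) ≤ P / 2)]
    _ ≤ P / 2 * (Real.sqrt 2 * 128) := by
        apply mul_le_mul_of_nonneg_left hS (by positivity)
    _ ≤ 256 * P := by nlinarith [Real.sqrt_nonneg 2]
end

section
/- Let α > 0. There exists a constant C = C(α) > 0 such that for every real K > 0, every integer r ≥ 2, and every t > 0: Σ_{i=2}^r Σ_{j=1}^{i−1} (2^{i−1}K)^α (2^{j−1}K)^α · t · e^{−(2^{i−1}K)^{2α} t} ≤ C. -/
open Finset

/-- `y e^{-y} ≤ e^{-1}` for all `y`. -/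
lemma my_xexp_le (y : ℝ) : y * Real.exp (-y) ≤ Real.exp (-1) := by
  have h := Real.add_one_le_exp (y - 1)
  have h2 : y ≤ Real.exp (y - 1) := by linarith
  calc y * Real.exp (-y) ≤ Real.exp (y - 1) * Real.exp (-y) := by
        apply mul_le_mul_of_nonneg_right h2 (Real.exp_pos _).le
    _ = Real.exp (-1) := by rw [← Real.exp_add]; ring_nf

/-- Pointwise bound turning `x e^{-x}` into a sum of two telescoping pieces. -/
lemma my_ptwise (q : ℝ) (hq : 1 < q) (x : ℝ) (hx : 0 < x) :
    x * Real.exp (-x) ≤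
      (2 * Real.exp (-1) / (1 - Real.exp (-((q - 1) / 2)))) *
          (Real.exp (-(x / 2)) - Real.exp (-(q * x / 2)))
        + (q / (q - 1)) * (min x 1 - min (x / q) 1) := by
  have hq0 : (0:ℝ) < q := by linarith
  have hd : 0 < 1 - Real.exp (-((q - 1) / 2)) := by
    have : Real.exp (-((q - 1) / 2)) < 1 := by
      rw [Real.exp_lt_one_iff]; linarith
    linarith
  have hC1 : 0 < 2 * Real.exp (-1) / (1 - Real.exp (-((q - 1) / 2))) := by positivity
  have hEm : Real.exp (-(q * x / 2)) ≤ Real.exp (-(x / 2)) := by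
    apply Real.exp_le_exp.2; nlinarith
  rcases le_or_gt x 1 with h1 | h1
  · have hxq : x / q ≤ 1 := le_trans (by
      rw [div_le_iff₀ hq0]; nlinarith) h1
    have hmin1 : min x 1 = x := min_eq_left h1
    have hmin2 : min (x / q) 1 = x / q := min_eq_left hxq
    have hxe : x * Real.exp (-x) ≤ x := by
      nlinarith [Real.exp_le_one_iff.2 (by linarith : -x ≤ 0), Real.exp_pos (-x)]
    have hq1 : q - 1 ≠ 0 := by linarith
    have heq : (q / (q - 1)) * (x - x / q) = x := by
      field_simp
    rw [hmin1, hmin2, heq]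
    nlinarith
  · have hmin : min (x / q) 1 ≤ min x 1 := by
      apply min_le_min _ le_rfl
      rw [div_le_iff₀ hq0]; nlinarith
    have hC2 : 0 ≤ (q / (q - 1)) * (min x 1 - min (x / q) 1) := by
      apply mul_nonneg (le_of_lt (div_pos (by linarith) (by linarith))) (by linarith)
    have hsplit : Real.exp (-(q * x / 2)) = Real.exp (-(x / 2)) * Real.exp (-((q - 1) * x / 2)) := by
      rw [← Real.exp_add]; ring_nf
    have hfac : Real.exp (-((q - 1) * x / 2)) ≤ Real.exp (-((q - 1) / 2)) := by
      apply Real.exp_le_exp.2; nlinarith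
    have hE : Real.exp (-(x / 2)) * (1 - Real.exp (-((q - 1) / 2))) ≤
        Real.exp (-(x / 2)) - Real.exp (-(q * x / 2)) := by
      rw [hsplit]
      have := Real.exp_pos (-(x / 2))
      nlinarith
    have hxe : x * Real.exp (-x) ≤ 2 * Real.exp (-1) * Real.exp (-(x / 2)) := by
      have h2 : (x / 2) * Real.exp (-(x / 2)) ≤ Real.exp (-1) := my_xexp_le (x / 2)
      have hex : Real.exp (-x) = Real.exp (-(x / 2)) * Real.exp (-(x / 2)) := by
        rw [← Real.exp_add]; ring_nf
      have := Real.exp_pos (-(x / 2))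
      nlinarith
    have hmain : x * Real.exp (-x) ≤
        (2 * Real.exp (-1) / (1 - Real.exp (-((q - 1) / 2)))) *
          (Real.exp (-(x / 2)) - Real.exp (-(q * x / 2))) := by
      calc x * Real.exp (-x) ≤ 2 * Real.exp (-1) * Real.exp (-(x / 2)) := hxe
        _ = (2 * Real.exp (-1) / (1 - Real.exp (-((q - 1) / 2)))) *
            (Real.exp (-(x / 2)) * (1 - Real.exp (-((q - 1) / 2)))) := by
            rw [div_mul_eq_mul_div, ← mul_assoc, mul_div_assoc, div_self hd.ne', mul_one]
        _ ≤ _ := mul_le_mul_of_nonneg_left hE hC1.le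
    linarith

/-- Key telescoping sum bound. -/
lemma my_key (q : ℝ) (hq : 1 < q) (s : ℝ) (hs : 0 < s) (n : ℕ) :
    ∑ k ∈ Finset.range n, (q ^ (k + 1) * s) * Real.exp (-(q ^ (k + 1) * s)) ≤
      2 * Real.exp (-1) / (1 - Real.exp (-((q - 1) / 2))) + q / (q - 1) := by
  have hq0 : (0:ℝ) < q := by linarith
  have hd : 0 < 1 - Real.exp (-((q - 1) / 2)) := by
    have : Real.exp (-((q - 1) / 2)) < 1 := by rw [Real.exp_lt_one_iff]; linarith
    linarith
  set C1 : ℝ := 2 * Real.exp (-1) / (1 - Real.exp (-((q - 1) / 2))) with hC1def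
  set C2 : ℝ := q / (q - 1) with hC2def
  have hC1 : 0 < C1 := by
    rw [hC1def]; exact div_pos (by positivity) hd
  have hC2 : 0 < C2 := by
    rw [hC2def]; exact div_pos (by linarith) (by linarith)
  set E : ℕ → ℝ := fun k => Real.exp (-(q ^ (k + 1) * s / 2)) with hEdef
  set M : ℕ → ℝ := fun k => min (q ^ k * s) 1 with hMdef
  have hstep : ∀ k ∈ Finset.range n, (q ^ (k + 1) * s) * Real.exp (-(q ^ (k + 1) * s)) ≤
      C1 * (E k - E (k + 1)) + C2 * (M (k + 1) - M k) := by
    intro k _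
    have hx : 0 < q ^ (k + 1) * s := by positivity
    have h := my_ptwise q hq (q ^ (k + 1) * s) hx
    have e1 : -(q * (q ^ (k + 1) * s) / 2) = -(q ^ (k + 1 + 1) * s / 2) := by
      rw [pow_succ]; ring
    have e2 : (q ^ (k + 1) * s) / q = q ^ k * s := by
      rw [pow_succ]; field_simp
    rw [e1, e2] at h
    exact h
  calc ∑ k ∈ Finset.range n, (q ^ (k + 1) * s) * Real.exp (-(q ^ (k + 1) * s))
      ≤ ∑ k ∈ Finset.range n, (C1 * (E k - E (k + 1)) + C2 * (M (k + 1) - M k)) :=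
        Finset.sum_le_sum hstep
    _ = C1 * (E 0 - E n) + C2 * (M n - M 0) := by
        rw [Finset.sum_add_distrib, ← Finset.mul_sum, ← Finset.mul_sum,
          Finset.sum_range_sub' E n, Finset.sum_range_sub M n]
    _ ≤ C1 * 1 + C2 * 1 := by
        have hE0 : E 0 ≤ 1 := Real.exp_le_one_iff.2 (neg_nonpos.2 (by positivity))
        have hEn : 0 < E n := Real.exp_pos _
        have hMn : M n ≤ 1 := min_le_right _ _
        have hM0 : 0 ≤ M 0 := le_min (by positivity) zero_le_one
        have := mul_le_mul_of_nonneg_left (by linarith : E 0 - E n ≤ 1) hC1.le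
        have := mul_le_mul_of_nonneg_left (by linarith : M n - M 0 ≤ 1) hC2.le
        linarith
    _ = C1 + C2 := by ring

lemma my_pow_rpow (m : ℕ) (α : ℝ) : ((2:ℝ) ^ m) ^ α = ((2:ℝ) ^ α) ^ m := by
  rw [← Real.rpow_natCast 2 m, ← Real.rpow_natCast ((2:ℝ) ^ α) m,
    ← Real.rpow_mul (by norm_num), ← Real.rpow_mul (by norm_num), mul_comm]

/-- Key scalar estimate: for `α > 0` there is `C = C(α)` such that for every `K > 0`, `r ≥ 2`
and `t > 0`,
`∑_{i=2}^r ∑_{j=1}^{i-1} (2^(i-1)K)^α (2^(j-1)K)^α · t · e^{-(2^(i-1)K)^{2α} t} ≤ C`. -/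
theorem stmt_11 (α : ℝ) (hα : 0 < α) :
    ∃ C : ℝ, 0 < C ∧
      ∀ K : ℝ, 0 < K → ∀ r : ℕ, 2 ≤ r → ∀ t : ℝ, 0 < t →
        (∑ i ∈ Finset.Icc 2 r, ∑ j ∈ Finset.Icc 1 (i - 1),
            ((2:ℝ) ^ (i - 1) * K) ^ α * ((2:ℝ) ^ (j - 1) * K) ^ α * t *
              Real.exp (-(((2:ℝ) ^ (i - 1) * K) ^ (2 * α)) * t)) ≤ C := by
  set p : ℝ := (2:ℝ) ^ α with hpdef
  have hp : 1 < p := Real.one_lt_rpow_iff_of_pos (by norm_num) |>.2 (Or.inl ⟨by norm_num, hα⟩)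
  have hp0 : (0:ℝ) < p := by linarith
  set q : ℝ := p * p with hqdef
  have hq : 1 < q := by nlinarith
  have hd : 0 < 1 - Real.exp (-((q - 1) / 2)) := by
    have : Real.exp (-((q - 1) / 2)) < 1 := by rw [Real.exp_lt_one_iff]; linarith
    linarith
  refine ⟨(2 * Real.exp (-1) / (1 - Real.exp (-((q - 1) / 2))) + q / (q - 1)) / (p - 1),
    div_pos (add_pos (div_pos (by positivity) hd) (div_pos (by linarith) (by linarith)))
      (by linarith), ?_⟩
  intro K hK r hr t ht
  have hKa : (0:ℝ) < K ^ α := Real.rpow_pos_of_pos hK α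
  have h2m : ∀ m : ℕ, ((2:ℝ) ^ m * K) ^ α = p ^ m * K ^ α := by
    intro m
    rw [Real.mul_rpow (by positivity) hK.le, my_pow_rpow]
  have hsq : ∀ m : ℕ, ((2:ℝ) ^ m * K) ^ (2 * α) = (p ^ m * K ^ α) * (p ^ m * K ^ α) := by
    intro m
    have hx : (0:ℝ) < 2 ^ m * K := by positivity
    rw [two_mul, Real.rpow_add hx, h2m]
  set s : ℝ := K ^ α * K ^ α * t with hsdef
  have hs : 0 < s := by positivity
  -- inner sum bound
  have hinner : ∀ i : ℕ, ∑ j ∈ Finset.Icc 1 (i - 1), ((2:ℝ) ^ (j - 1) * K) ^ α ≤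
      p ^ (i - 1) * K ^ α / (p - 1) := by
    intro i
    rw [← Finset.Ico_add_one_right_eq_Icc, Finset.sum_Ico_eq_sum_range]
    have hn : i - 1 + 1 - 1 = i - 1 := by omega
    rw [hn]
    have hcg : ∀ k ∈ Finset.range (i - 1), ((2:ℝ) ^ (1 + k - 1) * K) ^ α = p ^ k * K ^ α := by
      intro k _
      have hk : 1 + k - 1 = k := by omega
      rw [hk, h2m]
    rw [Finset.sum_congr rfl hcg, ← Finset.sum_mul,
      geom_sum_eq (by linarith : p ≠ 1) (i - 1)]
    rw [div_mul_eq_mul_div]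
    have hnum : (p ^ (i - 1) - 1) * K ^ α ≤ p ^ (i - 1) * K ^ α := by
      nlinarith [pow_pos hp0 (i - 1), hKa]
    exact (div_le_div_iff_of_pos_right (by linarith)).2 hnum
  -- main calc
  have hterm : ∀ i : ℕ,
      (((2:ℝ) ^ (i - 1) * K) ^ α * t * Real.exp (-(((2:ℝ) ^ (i - 1) * K) ^ (2 * α)) * t)) *
        (p ^ (i - 1) * K ^ α / (p - 1)) =
      (q ^ (i - 1) * s) * Real.exp (-(q ^ (i - 1) * s)) / (p - 1) := by
    intro i
    have harg : -(((2:ℝ) ^ (i - 1) * K) ^ (2 * α)) * t = -(q ^ (i - 1) * s) := by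
      rw [hsq, hqdef, mul_pow, hsdef]; ring
    rw [harg, h2m, hqdef, mul_pow, hsdef]
    ring
  calc (∑ i ∈ Finset.Icc 2 r, ∑ j ∈ Finset.Icc 1 (i - 1),
          ((2:ℝ) ^ (i - 1) * K) ^ α * ((2:ℝ) ^ (j - 1) * K) ^ α * t *
            Real.exp (-(((2:ℝ) ^ (i - 1) * K) ^ (2 * α)) * t))
      = ∑ i ∈ Finset.Icc 2 r,
          (((2:ℝ) ^ (i - 1) * K) ^ α * t * Real.exp (-(((2:ℝ) ^ (i - 1) * K) ^ (2 * α)) * t)) *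
            ∑ j ∈ Finset.Icc 1 (i - 1), ((2:ℝ) ^ (j - 1) * K) ^ α := by
        refine Finset.sum_congr rfl fun i _ => ?_
        rw [Finset.mul_sum]
        exact Finset.sum_congr rfl fun j _ => by ring
    _ ≤ ∑ i ∈ Finset.Icc 2 r,
          (((2:ℝ) ^ (i - 1) * K) ^ α * t * Real.exp (-(((2:ℝ) ^ (i - 1) * K) ^ (2 * α)) * t)) *
            (p ^ (i - 1) * K ^ α / (p - 1)) := by
        refine Finset.sum_le_sum fun i _ => ?_
        refine mul_le_mul_of_nonneg_left (hinner i) ?_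
        have h1 : (0:ℝ) < ((2:ℝ) ^ (i - 1) * K) ^ α := Real.rpow_pos_of_pos (by positivity) _
        positivity
    _ = ∑ i ∈ Finset.Icc 2 r, (q ^ (i - 1) * s) * Real.exp (-(q ^ (i - 1) * s)) / (p - 1) :=
        Finset.sum_congr rfl fun i _ => hterm i
    _ = (∑ k ∈ Finset.range (r - 1), (q ^ (k + 1) * s) * Real.exp (-(q ^ (k + 1) * s))) / (p - 1) := by
        rw [← Finset.Ico_add_one_right_eq_Icc, Finset.sum_Ico_eq_sum_range, ← Finset.sum_div]
        have hn : r + 1 - 2 = r - 1 := by omega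
        rw [hn]
        refine congrArg (· / (p - 1)) (Finset.sum_congr rfl fun k _ => ?_)
        have hk : 2 + k - 1 = k + 1 := by omega
        rw [hk]
    _ ≤ (2 * Real.exp (-1) / (1 - Real.exp (-((q - 1) / 2))) + q / (q - 1)) / (p - 1) := by
        exact (div_le_div_iff_of_pos_right (by linarith)).2 (my_key q hq s hs (r - 1))
end
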